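/- arXiv:1502.02398 — 3 statements merged into one kernel-verified Lean document; each statement's English description precedes it below -/
import Mathlib

section
/- Let k be a kernel with sup-norm bound ‖f‖_∞ ≤ 1 for all f in the unit ball of H_k, let P be a probability measure on Z, and let S = {z_1,…,z_n} be i.i.d. from P. Then with probability at least 1 − δ, ‖μ_k(P) − μ_k(P_S)‖_{H_k} ≤ 2√(𝔼_{z∼P}[k(z,z)]/n) + √(2 log(1/δ)/n). -/
open scoped RealInnerProductSpace
open MeasureTheory Real ProbabilityTheory


/-- The key analytic estimate behind Hoeffding's lemma. -/
lemma hoeffding_aux {p : ℝ} (hp0 : 0 ≤ p) (hp1 : p ≤ 1) (u : ℝ) :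
    -p * u + Real.log (1 - p + p * Real.exp u) ≤ u ^ 2 / 8 := by
  rcases eq_or_lt_of_le hp0 with h0 | h0
  · simp [← h0]; positivity
  rcases eq_or_lt_of_le hp1 with h1 | h1
  · subst h1
    simp [Real.log_exp]
    positivity
  -- 0 < p < 1
  have hs : ∀ v : ℝ, 0 < 1 - p + p * Real.exp v := fun v => by
    have := Real.exp_pos v; nlinarith
  set ψ : ℝ → ℝ := fun v => v ^ 2 / 8 - (-p * v + Real.log (1 - p + p * Real.exp v)) with hψ
  set D : ℝ → ℝ := fun v => v / 4 + p - p * Real.exp v / (1 - p + p * Real.exp v) with hD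
  have hsd : ∀ v : ℝ, HasDerivAt (fun w => 1 - p + p * Real.exp w) (p * Real.exp v) v := by
    intro v
    simpa using ((Real.hasDerivAt_exp v).const_mul p).const_add (1 - p)
  have hψd : ∀ v : ℝ, HasDerivAt ψ (D v) v := by
    intro v
    have hlog : HasDerivAt (fun w => Real.log (1 - p + p * Real.exp w))
        (p * Real.exp v / (1 - p + p * Real.exp v)) v := (hsd v).log (hs v).ne'
    have h1' : HasDerivAt (fun w : ℝ => w ^ 2 / 8) (v / 4) v := by
      have h := (hasDerivAt_pow 2 v).div_const 8
      norm_num at h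
      exact h.congr_deriv (by ring)
    have h2 : HasDerivAt (fun w => -p * w + Real.log (1 - p + p * Real.exp w))
        (-p + p * Real.exp v / (1 - p + p * Real.exp v)) v := by
      simpa using ((hasDerivAt_id v).const_mul (-p)).fun_add hlog
    have := h1'.fun_sub h2
    refine this.congr_deriv ?_
    ring
  have hDd : ∀ v : ℝ, HasDerivAt D
      (1 / 4 - (p * Real.exp v * (1 - p + p * Real.exp v) - p * Real.exp v * (p * Real.exp v)) /
        (1 - p + p * Real.exp v) ^ 2) v := by
    intro v
    have hnum : HasDerivAt (fun w => p * Real.exp w) (p * Real.exp v) v :=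
      (Real.hasDerivAt_exp v).const_mul p
    have hdiv : HasDerivAt (fun w => p * Real.exp w / (1 - p + p * Real.exp w))
        ((p * Real.exp v * (1 - p + p * Real.exp v) - p * Real.exp v * (p * Real.exp v)) /
          (1 - p + p * Real.exp v) ^ 2) v := hnum.div (hsd v) (hs v).ne'
    have hlin : HasDerivAt (fun w : ℝ => w / 4 + p) (1 / 4) v := by
      simpa using (hasDerivAt_id v).div_const 4 |>.add_const p
    simpa using hlin.fun_sub hdiv
  have hD0 : D 0 = 0 := by simp [hD]
  have hDnonneg : ∀ v, 0 ≤ 1 / 4 -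
      (p * Real.exp v * (1 - p + p * Real.exp v) - p * Real.exp v * (p * Real.exp v)) /
        (1 - p + p * Real.exp v) ^ 2 := by
    intro v
    rw [sub_nonneg, div_le_iff₀ (by have := hs v; positivity)]
    nlinarith [sq_nonneg (1 - p - p * Real.exp v), Real.exp_pos v]
  have hDmono : Monotone D :=
    monotone_of_deriv_nonneg (fun v => (hDd v).differentiableAt)
      (fun v => by rw [(hDd v).deriv]; exact hDnonneg v)
  have hψ0 : ψ 0 = 0 := by simp [hψ]
  -- ψ is nonneg everywhere
  have key : ∀ v : ℝ, 0 ≤ ψ v := by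
    intro v
    rcases le_total 0 v with hv | hv
    · have hmono : MonotoneOn ψ (Set.Ici 0) := by
        apply monotoneOn_of_deriv_nonneg (convex_Ici 0)
          ((fun v _ => (hψd v).differentiableAt.continuousAt.continuousWithinAt))
          (fun x hx => (hψd x).differentiableAt.differentiableWithinAt)
        intro x hx
        rw [(hψd x).deriv]
        have : (0:ℝ) ≤ x := le_of_lt (by simpa using hx)
        calc (0:ℝ) = D 0 := hD0.symm
          _ ≤ D x := hDmono this
      have := hmono (Set.self_mem_Ici) (Set.mem_Ici.mpr hv) hv
      simpa [hψ0] using this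
    · have hanti : AntitoneOn ψ (Set.Iic 0) := by
        apply antitoneOn_of_deriv_nonpos (convex_Iic 0)
          ((fun v _ => (hψd v).differentiableAt.continuousAt.continuousWithinAt))
          (fun x hx => (hψd x).differentiableAt.differentiableWithinAt)
        intro x hx
        rw [(hψd x).deriv]
        have hx0 : x ≤ 0 := le_of_lt (by simpa using hx)
        calc D x ≤ D 0 := hDmono hx0
          _ = 0 := hD0
      have := hanti (Set.mem_Iic.mpr hv) (Set.self_mem_Iic) hv
      simpa [hψ0] using this
  have := key u
  simp only [hψ] at this
  linarith

/-- Integrability of bounded a.e.-strongly-measurable functions on finite measures. -/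
lemma integrable_of_abs_bound {α E : Type*} [MeasurableSpace α] [NormedAddCommGroup E]
    {μ : Measure α} [IsFiniteMeasure μ] {f : α → E}
    (hf : AEStronglyMeasurable f μ) (C : ℝ) (h : ∀ x, ‖f x‖ ≤ C) : Integrable f μ :=
  Integrable.mono' (integrable_const C) hf (Filter.Eventually.of_forall h)

/-- Hoeffding's lemma. -/
lemma hoeffding_lemma {α : Type*} [MeasurableSpace α] (ν : Measure α) [IsProbabilityMeasure ν]
    {X : α → ℝ} (hX : AEStronglyMeasurable X ν) {a b : ℝ} (hab : ∀ x, X x ∈ Set.Icc a b)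
    (h0 : ∫ x, X x ∂ν = 0) (t : ℝ) :
    ∫ x, Real.exp (t * X x) ∂ν ≤ Real.exp (t ^ 2 * (b - a) ^ 2 / 8) := by
  haveI : Nonempty α := by
    by_contra h
    have : ν Set.univ = 0 := by
      have : (Set.univ : Set α) = ∅ := by
        simpa [Set.eq_empty_iff_forall_notMem] using fun x => (h ⟨x⟩)
      simp [this]
    simp [measure_univ] at this
  obtain ⟨x₀⟩ := ‹Nonempty α›
  have habs : ∀ x, |X x| ≤ max |a| |b| := fun x => abs_le.mpr
    ⟨by have h1 := (hab x).1; have h2 := neg_abs_le a; have h3 := le_max_left |a| |b|; linarith,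
     by have h1 := (hab x).2; have h2 := le_abs_self b; have h3 := le_max_right |a| |b|; linarith⟩
  have hIntX : Integrable X ν :=
    integrable_of_abs_bound hX (max |a| |b|) (fun x => by rw [Real.norm_eq_abs]; exact habs x)
  have ha0 : a ≤ 0 := by
    have : a ≤ ∫ x, X x ∂ν := by
      rw [show a = ∫ _ : α, a ∂ν by simp]
      exact integral_mono (integrable_const a) hIntX fun x => (hab x).1
    linarith [this, h0.le]
  have hb0 : 0 ≤ b := by
    have : (∫ x, X x ∂ν) ≤ b := by
      rw [show b = ∫ _ : α, b ∂ν by simp]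
      exact integral_mono hIntX (integrable_const b) fun x => (hab x).2
    linarith
  rcases eq_or_lt_of_le (ha0.trans hb0) with hab0 | hlt
  · -- a = b = 0, X ≡ 0
    have ha : a = 0 := le_antisymm ha0 (by linarith [(hab x₀).1, (hab x₀).2, hab0])
    have hb : b = 0 := by linarith
    have hXz : ∀ x, X x = 0 := fun x => le_antisymm (hb ▸ (hab x).2) (ha ▸ (hab x).1)
    simp only [hXz, mul_zero, Real.exp_zero, integral_const, probReal_univ,
      smul_eq_mul, mul_one]
    exact Real.one_le_exp (by positivity)
  -- a < b
  set p : ℝ := -a / (b - a) with hp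
  have hba : (0:ℝ) < b - a := by linarith
  have hp0 : 0 ≤ p := div_nonneg (by linarith) hba.le
  have hp1 : p ≤ 1 := by rw [hp, div_le_one hba]; linarith
  -- pointwise convexity bound
  have hconv : ∀ x, Real.exp (t * X x) ≤
      (b - X x) / (b - a) * Real.exp (t * a) + (X x - a) / (b - a) * Real.exp (t * b) := by
    intro x
    have hx := hab x
    have hw1 : (0:ℝ) ≤ (b - X x) / (b - a) := div_nonneg (by linarith [hx.2]) hba.le
    have hw2 : (0:ℝ) ≤ (X x - a) / (b - a) := div_nonneg (by linarith [hx.1]) hba.le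
    have hw3 : (b - X x) / (b - a) + (X x - a) / (b - a) = 1 := by field_simp; ring
    have hcvx := convexOn_exp.2 (Set.mem_univ (t * a)) (Set.mem_univ (t * b)) hw1 hw2 hw3
    simp only [smul_eq_mul] at hcvx
    rw [show (b - X x) / (b - a) * (t * a) + (X x - a) / (b - a) * (t * b) = t * X x from by
      rw [div_mul_eq_mul_div, div_mul_eq_mul_div, ← add_div, div_eq_iff hba.ne']
      ring] at hcvx
    exact hcvx
  -- integrate
  have hIntExp : Integrable (fun x => Real.exp (t * X x)) ν := by
    apply integrable_of_abs_bound
      (Real.continuous_exp.comp_aestronglyMeasurable (hX.const_mul t))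
      (Real.exp (|t| * max |a| |b|))
    intro x
    rw [Real.norm_eq_abs, Real.abs_exp]
    apply Real.exp_le_exp.mpr
    calc t * X x ≤ |t * X x| := le_abs_self _
      _ = |t| * |X x| := abs_mul t (X x)
      _ ≤ |t| * max |a| |b| := mul_le_mul_of_nonneg_left (habs x) (abs_nonneg t)
  have hInt1 : Integrable (fun x => (b - X x) / (b - a) * Real.exp (t * a)) ν := by
    apply Integrable.mul_const
    exact (Integrable.sub (integrable_const b) hIntX).div_const _
  have hInt2 : Integrable (fun x => (X x - a) / (b - a) * Real.exp (t * b)) ν := by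
    apply Integrable.mul_const
    exact (hIntX.sub (integrable_const a)).div_const _
  have hstep : ∫ x, Real.exp (t * X x) ∂ν ≤
      (1 - p) * Real.exp (t * a) + p * Real.exp (t * b) := by
    calc ∫ x, Real.exp (t * X x) ∂ν
        ≤ ∫ x, ((b - X x) / (b - a) * Real.exp (t * a) +
            (X x - a) / (b - a) * Real.exp (t * b)) ∂ν :=
          integral_mono hIntExp (hInt1.add hInt2) hconv
      _ = (1 - p) * Real.exp (t * a) + p * Real.exp (t * b) := by
          rw [integral_add hInt1 hInt2]
          simp only [div_mul_eq_mul_div, integral_div, integral_mul_const]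
          rw [integral_sub (integrable_const b) hIntX, integral_sub hIntX (integrable_const a),
            h0]
          simp only [integral_const, probReal_univ, one_smul, smul_eq_mul]
          rw [hp]
          field_simp
          ring
  refine hstep.trans ?_
  -- now use hoeffding_aux with u = t * (b - a)
  set u : ℝ := t * (b - a) with hu
  have hspos : 0 < 1 - p + p * Real.exp u := by
    rcases eq_or_lt_of_le hp0 with h | h
    · rw [← h]; norm_num
    · have := Real.exp_pos u
      nlinarith
  have hkey := hoeffding_aux hp0 hp1 u
  have hrw : (1 - p) * Real.exp (t * a) + p * Real.exp (t * b) =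
      Real.exp (-p * u + Real.log (1 - p + p * Real.exp u)) := by
    rw [Real.exp_add, Real.exp_log hspos]
    have hta : t * a = -p * u := by rw [hu, hp]; field_simp
    have htb : t * b = -p * u + u := by rw [hu, hp]; field_simp; ring
    rw [hta, htb, Real.exp_add]
    ring
  rw [hrw]
  apply Real.exp_le_exp.mpr
  calc -p * u + Real.log (1 - p + p * Real.exp u) ≤ u ^ 2 / 8 := hkey
    _ = t ^ 2 * (b - a) ^ 2 / 8 := by rw [hu]; ring

/-- MGF bound for functions of independent variables with bounded differences
(the heart of McDiarmid's inequality). -/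
lemma mcdiarmid_mgf {Z : Type*} [MeasurableSpace Z] (μ : Measure Z) [IsProbabilityMeasure μ]
    (n : ℕ) (g : (Fin n → Z) → ℝ) (hg : Measurable g) (B : ℝ) (hB : ∀ x, |g x| ≤ B)
    (c : ℝ) (hc : 0 ≤ c)
    (hdiff : ∀ (x : Fin n → Z) (i : Fin n) (y : Z), |g x - g (Function.update x i y)| ≤ c)
    (t : ℝ) :
    ∫ x, Real.exp (t * (g x - ∫ x', g x' ∂(Measure.pi fun _ : Fin n => μ)))
        ∂(Measure.pi fun _ : Fin n => μ) ≤ Real.exp (n * (t ^ 2 * c ^ 2 / 8)) := by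
  haveI : Nonempty Z := by
    by_contra hne
    have : μ Set.univ = 0 := by
      have : (Set.univ : Set Z) = ∅ := by
        simpa [Set.eq_empty_iff_forall_notMem] using fun x => (hne ⟨x⟩)
      simp [this]
    simp [measure_univ] at this
  obtain ⟨z₀⟩ := ‹Nonempty Z›
  induction n generalizing B with
  | zero =>
      have hx : ∀ x : Fin 0 → Z, x = Fin.elim0 := fun x => funext fun i => i.elim0
      have hgc : ∀ x, g x = g Fin.elim0 := fun x => by rw [hx x]
      calc ∫ x, Real.exp (t * (g x - ∫ x', g x' ∂(Measure.pi fun _ : Fin 0 => μ)))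
            ∂(Measure.pi fun _ : Fin 0 => μ)
          = ∫ x, Real.exp (t * (g Fin.elim0 - g Fin.elim0))
              ∂(Measure.pi fun _ : Fin 0 => μ) := by
            congr 1
            ext x
            rw [hgc x]
            congr 2
            have : ∫ x', g x' ∂(Measure.pi fun _ : Fin 0 => μ)
                = ∫ _, g Fin.elim0 ∂(Measure.pi fun _ : Fin 0 => μ) := by
              congr 1; ext x'; rw [hgc x']
            rw [this, integral_const]
            simp
        _ = 1 := by simp
        _ ≤ Real.exp (0 * (t ^ 2 * c ^ 2 / 8)) := by norm_num
      norm_num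
  | succ n IH =>
      set Pn : Measure (Fin n → Z) := Measure.pi fun _ => μ with hPn
      set PN : Measure (Fin (n + 1) → Z) := Measure.pi fun _ => μ with hPN
      set e : ((i : Fin (n + 1)) → Z) ≃ᵐ Z × ((j : Fin n) → Z) :=
        MeasurableEquiv.piFinSuccAbove (fun _ : Fin (n + 1) => Z) 0 with he
      have mp : MeasurePreserving e PN (μ.prod Pn) :=
        measurePreserving_piFinSuccAbove (fun _ : Fin (n + 1) => μ) 0
      have hesymm : ∀ (z : Z) (xs : Fin n → Z), e.symm (z, xs) = Fin.cons z xs := by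
        intro z xs
        show (Fin.insertNthEquiv (fun _ => Z) 0) (z, xs) = Fin.cons z xs
        simp [Fin.insertNthEquiv, Fin.insertNth_zero']
      -- measurability of cons maps
      have hconsz : ∀ xs : Fin n → Z, Measurable fun z => (Fin.cons z xs : Fin (n+1) → Z) := by
        intro xs
        apply measurable_pi_iff.mpr
        intro i
        refine Fin.cases ?_ ?_ i
        · simpa using measurable_id'
        · intro j; simpa using measurable_const
      have hcons2 : Measurable fun q : (Fin n → Z) × Z => (Fin.cons q.2 q.1 : Fin (n+1) → Z) := by
        apply measurable_pi_iff.mpr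
        intro i
        refine Fin.cases ?_ ?_ i
        · simpa using measurable_snd
        · intro j
          simpa [Function.comp_def] using (measurable_pi_apply j).comp measurable_fst
      have hcons2' : Measurable fun q : Z × (Fin n → Z) => (Fin.cons q.1 q.2 : Fin (n+1) → Z) := by
        apply measurable_pi_iff.mpr
        intro i
        refine Fin.cases ?_ ?_ i
        · simpa using measurable_fst
        · intro j
          simpa [Function.comp_def] using (measurable_pi_apply j).comp measurable_snd
      -- the conditioned function
      set h : (Fin n → Z) → ℝ := fun xs => ∫ z, g (Fin.cons z xs) ∂μ with hh
      have hsm : StronglyMeasurable h := by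
        have : StronglyMeasurable (Function.uncurry fun xs (z : Z) => g (Fin.cons z xs)) :=
          (hg.comp hcons2).stronglyMeasurable
        exact this.integral_prod_right
      have hmeas : Measurable h := hsm.measurable
      have hIntcons : ∀ xs : Fin n → Z, Integrable (fun z => g (Fin.cons z xs)) μ := fun xs =>
        integrable_of_abs_bound ((hg.comp (hconsz xs)).aestronglyMeasurable) B
          (fun z => hB _)
      have hBh : ∀ xs, |h xs| ≤ B := by
        intro xs
        rw [← Real.norm_eq_abs]
        calc ‖h xs‖ ≤ B * μ.real Set.univ :=
              norm_integral_le_of_norm_le_const (Filter.Eventually.of_forall fun z => by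
                rw [Real.norm_eq_abs]; exact hB _)
          _ = B := by simp
      have hdiffh : ∀ (xs : Fin n → Z) (i : Fin n) (y : Z),
          |h xs - h (Function.update xs i y)| ≤ c := by
        intro xs i y
        have hrw : ∀ z : Z, (Fin.cons z (Function.update xs i y) : Fin (n+1) → Z)
            = Function.update (Fin.cons z xs) i.succ y := by
          intro z
          funext j
          refine Fin.cases ?_ ?_ j
          · rw [Function.update_of_ne (Fin.succ_ne_zero i).symm]
            simp
          · intro j'
            rcases eq_or_ne j' i with rfl | hne
            · simp
            · rw [Function.update_of_ne (fun hcon => hne (Fin.succ_injective _ hcon))]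
              simp [Function.update_of_ne hne]
        have : h xs - h (Function.update xs i y)
            = ∫ z, (g (Fin.cons z xs) - g (Function.update (Fin.cons z xs) i.succ y)) ∂μ := by
          rw [integral_sub (hIntcons xs) ?_]
          · congr 1
            apply integral_congr_ae
            filter_upwards with z
            rw [hrw z]
          · have := hIntcons (Function.update xs i y)
            apply this.congr
            filter_upwards with z
            rw [hrw z]
        rw [this, ← Real.norm_eq_abs]
        calc ‖_‖ ≤ c * μ.real Set.univ :=
              norm_integral_le_of_norm_le_const (Filter.Eventually.of_forall fun z => by
                rw [Real.norm_eq_abs]; exact hdiff _ _ _)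
          _ = c := by simp
      -- M is the global mean
      set M : ℝ := ∫ x, g x ∂PN with hM
      have hgB' : ∀ p : Z × (Fin n → Z), |g (Fin.cons p.1 p.2) - M| ≤ B + |M| := by
        intro p
        calc |g (Fin.cons p.1 p.2) - M| ≤ |g (Fin.cons p.1 p.2)| + |M| := abs_sub _ _
          _ ≤ B + |M| := by linarith [hB (Fin.cons p.1 p.2)]
      have hIntprod : Integrable (fun p : Z × (Fin n → Z) =>
          Real.exp (t * (g (Fin.cons p.1 p.2) - M))) (μ.prod Pn) := by
        apply integrable_of_abs_bound
          ((((hg.comp hcons2').sub measurable_const).const_mul t).exp.aestronglyMeasurable)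
          (Real.exp (|t| * (B + |M|)))
        intro p
        rw [Real.norm_eq_abs, Real.abs_exp]
        apply Real.exp_le_exp.mpr
        calc t * (g (Fin.cons p.1 p.2) - M) ≤ |t * (g (Fin.cons p.1 p.2) - M)| := le_abs_self _
          _ = |t| * |g (Fin.cons p.1 p.2) - M| := abs_mul _ _
          _ ≤ |t| * (B + |M|) := mul_le_mul_of_nonneg_left (hgB' p) (abs_nonneg t)
      -- Fubini: M = ∫ h dPn
      have hMh : M = ∫ xs, h xs ∂Pn := by
        have h1 : M = ∫ p, g (e.symm p) ∂(μ.prod Pn) := by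
          rw [hM, ← mp.integral_comp e.measurableEmbedding (fun p => g (e.symm p))]
          congr 1
          ext x
          simp
        rw [h1]
        have h2 : Integrable (fun p : Z × (Fin n → Z) => g (e.symm p)) (μ.prod Pn) := by
          refine integrable_of_abs_bound ?_ B ?_
          · have : (fun p : Z × (Fin n → Z) => g (e.symm p)) = fun p => g (Fin.cons p.1 p.2) := by
              ext p; rw [hesymm p.1 p.2]
            rw [this]
            exact (hg.comp hcons2').aestronglyMeasurable
          · exact fun p => hB _
        rw [integral_prod_symm _ h2]
        congr 1
        ext xs
        congr 1
        ext z
        rw [hesymm]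
      -- the main computation
      have step1 : ∫ x, Real.exp (t * (g x - M)) ∂PN
          = ∫ p, Real.exp (t * (g (Fin.cons p.1 p.2) - M)) ∂(μ.prod Pn) := by
        rw [← mp.integral_comp e.measurableEmbedding
          (fun p => Real.exp (t * (g (Fin.cons p.1 p.2) - M)))]
        congr 1
        ext x
        congr 3
        have : (Fin.cons (e x).1 (e x).2 : Fin (n+1) → Z) = e.symm (e x) := by
          rw [hesymm]
        rw [this]
        simp
      have step2 : ∫ p, Real.exp (t * (g (Fin.cons p.1 p.2) - M)) ∂(μ.prod Pn)
          = ∫ xs, ∫ z, Real.exp (t * (g (Fin.cons z xs) - M)) ∂μ ∂Pn :=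
        integral_prod_symm _ hIntprod
      -- inner bound
      have inner_bound : ∀ xs : Fin n → Z,
          ∫ z, Real.exp (t * (g (Fin.cons z xs) - M)) ∂μ
            ≤ Real.exp (t * (h xs - M)) * Real.exp (t ^ 2 * c ^ 2 / 8) := by
        intro xs
        have hsplit : ∀ z : Z, Real.exp (t * (g (Fin.cons z xs) - M))
            = Real.exp (t * (h xs - M)) * Real.exp (t * (g (Fin.cons z xs) - h xs)) := by
          intro z
          rw [← Real.exp_add]
          congr 1
          ring
        simp_rw [hsplit]
        rw [integral_const_mul]
        apply mul_le_mul_of_nonneg_left _ (Real.exp_nonneg _)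
        -- apply Hoeffding's lemma
        set a : ℝ := sInf (Set.range fun z => g (Fin.cons z xs)) - h xs with ha
        have hbdd : BddBelow (Set.range fun z => g (Fin.cons z xs)) := by
          refine ⟨g (Fin.cons z₀ xs) - c, ?_⟩
          rintro w ⟨z, rfl⟩
          have := hdiff (Fin.cons z₀ xs) 0 z
          rw [Fin.update_cons_zero] at this
          have := abs_le.mp this
          linarith [this.1]
        have hne : (Set.range fun z => g (Fin.cons z xs)).Nonempty := ⟨_, ⟨z₀, rfl⟩⟩
        have hXicc : ∀ z : Z, g (Fin.cons z xs) - h xs ∈ Set.Icc a (a + c) := by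
          intro z
          constructor
          · have : sInf (Set.range fun z => g (Fin.cons z xs)) ≤ g (Fin.cons z xs) :=
              csInf_le hbdd ⟨z, rfl⟩
            rw [ha]; linarith
          · have : g (Fin.cons z xs) - c ≤ sInf (Set.range fun z => g (Fin.cons z xs)) := by
              apply le_csInf hne
              rintro w ⟨z', rfl⟩
              have := hdiff (Fin.cons z xs) 0 z'
              rw [Fin.update_cons_zero] at this
              have := abs_le.mp this
              linarith [this.2]
            rw [ha]; linarith
        have hX0 : ∫ z, (g (Fin.cons z xs) - h xs) ∂μ = 0 := by
          rw [integral_sub (hIntcons xs) (integrable_const _)]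
          simp [hh]
        have := hoeffding_lemma μ (X := fun z => g (Fin.cons z xs) - h xs)
          (((hg.comp (hconsz xs)).sub measurable_const).aestronglyMeasurable)
          hXicc hX0 t
        calc ∫ z, Real.exp (t * (g (Fin.cons z xs) - h xs)) ∂μ
            ≤ Real.exp (t ^ 2 * (a + c - a) ^ 2 / 8) := this
          _ = Real.exp (t ^ 2 * c ^ 2 / 8) := by norm_num
      -- integrate the inner bound
      have hIntF1 : Integrable (fun xs => ∫ z, Real.exp (t * (g (Fin.cons z xs) - M)) ∂μ) Pn :=
        hIntprod.integral_prod_right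
      have hIntF2 : Integrable
          (fun xs => Real.exp (t * (h xs - M)) * Real.exp (t ^ 2 * c ^ 2 / 8)) Pn := by
        apply integrable_of_abs_bound
          (((((hmeas.sub measurable_const).const_mul t).exp).mul
              measurable_const).aestronglyMeasurable)
          (Real.exp (|t| * (B + |M|)) * Real.exp (t ^ 2 * c ^ 2 / 8))
        intro xs
        rw [Real.norm_eq_abs, Pi.mul_apply, abs_mul, Real.abs_exp, Real.abs_exp]
        apply mul_le_mul_of_nonneg_right _ (Real.exp_nonneg _)
        apply Real.exp_le_exp.mpr
        calc t * (h xs - M) ≤ |t * (h xs - M)| := le_abs_self _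
          _ = |t| * |h xs - M| := abs_mul _ _
          _ ≤ |t| * (B + |M|) := by
              apply mul_le_mul_of_nonneg_left _ (abs_nonneg t)
              calc |h xs - M| ≤ |h xs| + |M| := abs_sub _ _
                _ ≤ B + |M| := by linarith [hBh xs]
      have step3 : ∫ xs, ∫ z, Real.exp (t * (g (Fin.cons z xs) - M)) ∂μ ∂Pn
          ≤ ∫ xs, Real.exp (t * (h xs - M)) * Real.exp (t ^ 2 * c ^ 2 / 8) ∂Pn :=
        integral_mono hIntF1 hIntF2 inner_bound
      have step4 : ∫ xs, Real.exp (t * (h xs - M)) * Real.exp (t ^ 2 * c ^ 2 / 8) ∂Pn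
          = (∫ xs, Real.exp (t * (h xs - M)) ∂Pn) * Real.exp (t ^ 2 * c ^ 2 / 8) :=
        integral_mul_const _ _
      have hIH := IH (fun xs => h xs) hmeas B hBh hdiffh
      rw [← hMh] at hIH
      calc ∫ x, Real.exp (t * (g x - M)) ∂PN
          = ∫ xs, ∫ z, Real.exp (t * (g (Fin.cons z xs) - M)) ∂μ ∂Pn := by
            rw [step1, step2]
        _ ≤ (∫ xs, Real.exp (t * (h xs - M)) ∂Pn) * Real.exp (t ^ 2 * c ^ 2 / 8) := by
            rw [← step4]; exact step3
        _ ≤ Real.exp (n * (t ^ 2 * c ^ 2 / 8)) * Real.exp (t ^ 2 * c ^ 2 / 8) := by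
            apply mul_le_mul_of_nonneg_right hIH (Real.exp_nonneg _)
        _ = Real.exp ((n + 1 : ℕ) * (t ^ 2 * c ^ 2 / 8)) := by
            rw [← Real.exp_add]
            congr 1
            push_cast
            ring

/-- McDiarmid's inequality (one-sided tail). -/
lemma mcdiarmid_tail {Z : Type*} [MeasurableSpace Z] (μ : Measure Z) [IsProbabilityMeasure μ]
    (n : ℕ) (hn : 0 < n) (g : (Fin n → Z) → ℝ) (hg : Measurable g) (B : ℝ) (hB : ∀ x, |g x| ≤ B)
    (c : ℝ) (hc : 0 < c)
    (hdiff : ∀ (x : Fin n → Z) (i : Fin n) (y : Z), |g x - g (Function.update x i y)| ≤ c)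
    (ε : ℝ) (hε : 0 < ε) :
    (Measure.pi fun _ : Fin n => μ)
        {x | (∫ x', g x' ∂(Measure.pi fun _ : Fin n => μ)) + ε ≤ g x}
      ≤ ENNReal.ofReal (Real.exp (-2 * ε ^ 2 / (n * c ^ 2))) := by
  set Pn : Measure (Fin n → Z) := Measure.pi fun _ => μ with hPn
  set M : ℝ := ∫ x', g x' ∂Pn with hM
  set X : (Fin n → Z) → ℝ := fun x => g x - M with hX
  set t : ℝ := 4 * ε / (n * c ^ 2) with ht
  have hnR : (0:ℝ) < n := by exact_mod_cast hn
  have ht0 : 0 ≤ t := by positivity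
  have hIntExp : Integrable (fun x => Real.exp (t * X x)) Pn := by
    apply integrable_of_abs_bound (((hg.sub measurable_const).const_mul t).exp.aestronglyMeasurable)
      (Real.exp (|t| * (B + |M|)))
    intro x
    rw [Real.norm_eq_abs, Real.abs_exp]
    apply Real.exp_le_exp.mpr
    calc t * X x ≤ |t * X x| := le_abs_self _
      _ = |t| * |X x| := abs_mul _ _
      _ ≤ |t| * (B + |M|) := by
          apply mul_le_mul_of_nonneg_left _ (abs_nonneg t)
          calc |X x| = |g x - M| := rfl
            _ ≤ |g x| + |M| := abs_sub _ _
            _ ≤ B + |M| := by linarith [hB x]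
  have hmgf : mgf X Pn t ≤ Real.exp (n * (t ^ 2 * c ^ 2 / 8)) := by
    have := mcdiarmid_mgf μ n g hg B hB c hc.le hdiff t
    rw [← hPn, ← hM] at this
    exact this
  have hcher := measure_ge_le_exp_mul_mgf (X := X) (μ := Pn) (t := t) ε ht0 hIntExp
  have hset : {x | M + ε ≤ g x} = {ω | ε ≤ X ω} := by
    ext x; simp only [Set.mem_setOf_eq, hX]; constructor <;> intro h <;> linarith
  rw [hset]
  have hfin : Pn {ω | ε ≤ X ω} ≠ ⊤ := measure_ne_top _ _
  rw [← ENNReal.ofReal_toReal hfin]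
  apply ENNReal.ofReal_le_ofReal
  calc (Pn {ω | ε ≤ X ω}).toReal ≤ Real.exp (-t * ε) * mgf X Pn t := hcher
    _ ≤ Real.exp (-t * ε) * Real.exp (n * (t ^ 2 * c ^ 2 / 8)) :=
        mul_le_mul_of_nonneg_left hmgf (Real.exp_nonneg _)
    _ = Real.exp (-t * ε + n * (t ^ 2 * c ^ 2 / 8)) := (Real.exp_add _ _).symm
    _ = Real.exp (-2 * ε ^ 2 / (n * c ^ 2)) := by
        congr 1
        rw [ht]
        field_simp
        ring

lemma measurePreserving_eval_pi {Z : Type*} [MeasurableSpace Z] (μ : Measure Z)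
    [IsProbabilityMeasure μ] (n : ℕ) (i : Fin n) :
    MeasurePreserving (Function.eval i) (Measure.pi fun _ : Fin n => μ) μ := by
  constructor
  · exact measurable_pi_apply i
  · apply Measure.ext
    intro s hs
    rw [Measure.map_apply (measurable_pi_apply i) hs]
    have hpre : (Function.eval i ⁻¹' s : Set (Fin n → Z))
        = Set.pi Set.univ (Function.update (fun _ => Set.univ) i s) := by
      ext x
      simp only [Set.mem_preimage, Set.mem_pi, Set.mem_univ, forall_true_left]
      constructor
      · intro hx j
        rcases eq_or_ne j i with rfl | hne
        · simpa using hx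
        · simp [Function.update_of_ne hne]
      · intro hx
        simpa using hx i
    rw [hpre, Measure.pi_pi]
    rw [← Finset.mul_prod_erase Finset.univ _ (Finset.mem_univ i)]
    rw [Finset.prod_eq_one (fun k hk => by
      rw [Function.update_of_ne (Finset.mem_erase.mp hk).1]
      simp)]
    simp

lemma measurePreserving_eval_pair {Z : Type*} [MeasurableSpace Z] (μ : Measure Z)
    [IsProbabilityMeasure μ] (n : ℕ) (i j : Fin n) (hij : i ≠ j) :
    MeasurePreserving (fun x : Fin n → Z => (x i, x j))
      (Measure.pi fun _ : Fin n => μ) (μ.prod μ) := by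
  constructor
  · exact (measurable_pi_apply i).prodMk (measurable_pi_apply j)
  · symm
    apply Measure.prod_eq
    intro s t hs ht
    rw [Measure.map_apply ((measurable_pi_apply i).prodMk (measurable_pi_apply j))
      (hs.prod ht)]
    have hpre : ((fun x : Fin n → Z => (x i, x j)) ⁻¹' s ×ˢ t)
        = Set.pi Set.univ (Function.update (Function.update (fun _ => Set.univ) i s) j t) := by
      ext x
      simp only [Set.mem_preimage, Set.mem_prod, Set.mem_pi, Set.mem_univ, forall_true_left]
      constructor
      · intro hx k
        rcases eq_or_ne k j with rfl | hnej
        · simp [Function.update_self, hx.2]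
        · rcases eq_or_ne k i with rfl | hnei
          · simp [Function.update_of_ne hnej, hx.1]
          · simp [Function.update_of_ne hnej, Function.update_of_ne hnei]
      · intro hx
        constructor
        · have := hx i
          rwa [Function.update_of_ne hij, Function.update_self] at this
        · have := hx j
          rwa [Function.update_self] at this
    rw [hpre, Measure.pi_pi]
    rw [← Finset.mul_prod_erase Finset.univ _ (Finset.mem_univ j)]
    rw [← Finset.mul_prod_erase (Finset.univ.erase j) _
      (Finset.mem_erase.mpr ⟨hij, Finset.mem_univ i⟩)]
    rw [Finset.prod_eq_one (fun k hk => by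
      have hkj : k ≠ j := (Finset.mem_erase.mp (Finset.mem_erase.mp hk).2).1
      have hki : k ≠ i := (Finset.mem_erase.mp hk).1
      rw [Function.update_of_ne hkj, Function.update_of_ne hki]
      simp)]
    rw [Function.update_self, Function.update_of_ne hij, Function.update_self]
    simp [mul_comm]

section
variable {Z H : Type*} [MeasurableSpace Z] [NormedAddCommGroup H] [InnerProductSpace ℝ H]
  [CompleteSpace H]

/-- transfer an integral along a coordinate evaluation -/
lemma integral_eval_pi {P : Measure Z} [IsProbabilityMeasure P] {n : ℕ} (i : Fin n)
    {f : Z → ℝ} (hf : AEStronglyMeasurable f P) :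
    ∫ x : Fin n → Z, f (x i) ∂(Measure.pi fun _ : Fin n => P) = ∫ z, f z ∂P := by
  have hev := measurePreserving_eval_pi P n i
  calc ∫ x : Fin n → Z, f (x i) ∂(Measure.pi fun _ : Fin n => P)
      = ∫ z, f z ∂((Measure.pi fun _ : Fin n => P).map (Function.eval i)) := by
        exact (integral_map hev.measurable.aemeasurable
          (by rw [hev.map_eq]; exact hf)).symm
    _ = ∫ z, f z ∂P := by rw [hev.map_eq]

lemma second_moment_bound (K : Z → H) (hsm : StronglyMeasurable K) (hK1 : ∀ z, ‖K z‖ ≤ 1)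
    (P : Measure Z) [IsProbabilityMeasure P] (n : ℕ) (hn : 0 < n) :
    ∫ x, ‖(∫ z, K z ∂P) - (n : ℝ)⁻¹ • ∑ i, K (x i)‖ ^ 2 ∂(Measure.pi fun _ : Fin n => P)
      ≤ (∫ z, ⟪K z, K z⟫ ∂P) / n := by
  set Pn : Measure (Fin n → Z) := Measure.pi fun _ : Fin n => P with hPn
  have hIntK : Integrable K P := integrable_of_abs_bound hsm.aestronglyMeasurable 1 hK1
  set m : H := ∫ z, K z ∂P with hm
  set Ek : ℝ := ∫ z, ⟪K z, K z⟫ ∂P with hEk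
  set Q : ℝ := ⟪m, m⟫ with hQ
  have hnR : (0:ℝ) < n := by exact_mod_cast hn
  have hm1 : ‖m‖ ≤ 1 := by
    calc ‖m‖ ≤ 1 * P.real Set.univ := norm_integral_le_of_norm_le_const
          (Filter.Eventually.of_forall hK1)
      _ = 1 := by simp
  set A : (Fin n → Z) → H := fun x => (n : ℝ)⁻¹ • ∑ i, K (x i) with hA
  have hsmA : StronglyMeasurable A := by
    apply StronglyMeasurable.const_smul
    exact Finset.stronglyMeasurable_fun_sum _ fun i _ => hsm.comp_measurable (measurable_pi_apply i)
  have hA1 : ∀ x, ‖A x‖ ≤ 1 := by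
    intro x
    rw [hA]
    simp only [norm_smul, norm_inv, Real.norm_natCast]
    rw [inv_mul_le_iff₀ hnR, mul_one]
    calc ‖∑ i, K (x i)‖ ≤ ∑ i : Fin n, ‖K (x i)‖ := norm_sum_le _ _
      _ ≤ ∑ _i : Fin n, (1:ℝ) := Finset.sum_le_sum fun i _ => hK1 _
      _ = n := by simp
  -- pointwise expansion
  have hexp : ∀ x, ‖m - A x‖ ^ 2 = ‖m‖ ^ 2 - 2 * ⟪m, A x⟫ + ‖A x‖ ^ 2 := fun x =>
    norm_sub_sq_real m (A x)
  -- integrability of the pieces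
  have hIntInner : Integrable (fun x => ⟪m, A x⟫) Pn :=
    integrable_of_abs_bound (stronglyMeasurable_const.inner hsmA).aestronglyMeasurable 1
      (fun x => by
        rw [Real.norm_eq_abs]
        calc |⟪m, A x⟫| ≤ ‖m‖ * ‖A x‖ := abs_real_inner_le_norm _ _
          _ ≤ 1 * 1 := mul_le_mul hm1 (hA1 x) (norm_nonneg _) zero_le_one
          _ = 1 := by norm_num)
  have hIntA2 : Integrable (fun x => ‖A x‖ ^ 2) Pn :=
    integrable_of_abs_bound (hsmA.norm.pow 2).aestronglyMeasurable 1
      (fun x => by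
        rw [Real.norm_eq_abs, abs_pow, abs_norm]
        calc ‖A x‖ ^ 2 ≤ 1 ^ 2 := by
              apply pow_le_pow_left₀ (norm_nonneg _) (hA1 x)
          _ = 1 := one_pow 2)
  -- compute ∫ ⟪m, A x⟫
  have hInnerEval : ∀ i : Fin n, ∫ x, ⟪m, K (x i)⟫ ∂Pn = Q := by
    intro i
    rw [integral_eval_pi i (stronglyMeasurable_const.inner hsm).aestronglyMeasurable]
    rw [integral_inner hIntK m, ← hm, hQ]
  have hIntInner' : ∀ i : Fin n, Integrable (fun x : Fin n → Z => ⟪m, K (x i)⟫) Pn := by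
    intro i
    apply integrable_of_abs_bound
      (stronglyMeasurable_const.inner (hsm.comp_measurable (measurable_pi_apply i))).aestronglyMeasurable 1
    intro x
    rw [Real.norm_eq_abs]
    calc |⟪m, K (x i)⟫| ≤ ‖m‖ * ‖K (x i)‖ := abs_real_inner_le_norm _ _
      _ ≤ 1 * 1 := mul_le_mul hm1 (hK1 _) (norm_nonneg _) zero_le_one
      _ = 1 := by norm_num
  have hT2 : ∫ x, ⟪m, A x⟫ ∂Pn = Q := by
    have : ∀ x, ⟪m, A x⟫ = (n : ℝ)⁻¹ * ∑ i, ⟪m, K (x i)⟫ := by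
      intro x
      rw [hA]
      rw [real_inner_smul_right, inner_sum]
    simp_rw [this]
    rw [integral_const_mul, integral_finset_sum _ (fun i _ => hIntInner' i)]
    simp_rw [hInnerEval]
    simp only [Finset.sum_const, Finset.card_univ, Fintype.card_fin, nsmul_eq_mul]
    field_simp
  -- compute ∫ ⟪K (x i), K (x j)⟫
  have hIntKij : ∀ i j : Fin n, Integrable (fun x : Fin n → Z => ⟪K (x i), K (x j)⟫) Pn := by
    intro i j
    apply integrable_of_abs_bound
      ((hsm.comp_measurable (measurable_pi_apply i)).inner
        (hsm.comp_measurable (measurable_pi_apply j))).aestronglyMeasurable 1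
    intro x
    rw [Real.norm_eq_abs]
    calc |⟪K (x i), K (x j)⟫| ≤ ‖K (x i)‖ * ‖K (x j)‖ := abs_real_inner_le_norm _ _
      _ ≤ 1 * 1 := mul_le_mul (hK1 _) (hK1 _) (norm_nonneg _) zero_le_one
      _ = 1 := by norm_num
  have hKij : ∀ i j : Fin n, ∫ x, ⟪K (x i), K (x j)⟫ ∂Pn = if i = j then Ek else Q := by
    intro i j
    rcases eq_or_ne i j with rfl | hij
    · rw [if_pos rfl]
      exact integral_eval_pi i (hsm.inner hsm).aestronglyMeasurable
    · rw [if_neg hij]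
      have hpair := measurePreserving_eval_pair P n i j hij
      have hmeasprod : AEStronglyMeasurable (fun p : Z × Z => ⟪K p.1, K p.2⟫) (P.prod P) :=
        ((hsm.comp_measurable measurable_fst).inner
          (hsm.comp_measurable measurable_snd)).aestronglyMeasurable
      have h1 : ∫ x, ⟪K (x i), K (x j)⟫ ∂Pn = ∫ p : Z × Z, ⟪K p.1, K p.2⟫ ∂(P.prod P) := by
        calc ∫ x, ⟪K (x i), K (x j)⟫ ∂Pn
            = ∫ p : Z × Z, ⟪K p.1, K p.2⟫ ∂(Pn.map fun x : Fin n → Z => (x i, x j)) := by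
              exact (integral_map hpair.measurable.aemeasurable
                (by rw [hpair.map_eq]; exact hmeasprod)).symm
          _ = ∫ p : Z × Z, ⟪K p.1, K p.2⟫ ∂(P.prod P) := by rw [hpair.map_eq]
      rw [h1]
      have hIntprod : Integrable (fun p : Z × Z => ⟪K p.1, K p.2⟫) (P.prod P) := by
        apply integrable_of_abs_bound hmeasprod 1
        intro p
        rw [Real.norm_eq_abs]
        calc |⟪K p.1, K p.2⟫| ≤ ‖K p.1‖ * ‖K p.2‖ := abs_real_inner_le_norm _ _
          _ ≤ 1 * 1 := mul_le_mul (hK1 _) (hK1 _) (norm_nonneg _) zero_le_one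
          _ = 1 := by norm_num
      rw [integral_prod _ hIntprod]
      have : ∀ z1, ∫ z2, ⟪K z1, K z2⟫ ∂P = ⟪K z1, m⟫ := fun z1 => by
        rw [integral_inner hIntK, ← hm]
      simp_rw [this]
      have : ∀ z1, ⟪K z1, m⟫ = ⟪m, K z1⟫ := fun z1 => real_inner_comm _ _
      simp_rw [this]
      rw [integral_inner hIntK m, ← hm, hQ]
  -- compute ∫ ‖A x‖²
  have hT3 : ∫ x, ‖A x‖ ^ 2 ∂Pn = (n:ℝ)⁻¹ * (n:ℝ)⁻¹ * (n * (Q * n + (Ek - Q))) := by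
    have hptw : ∀ x, ‖A x‖ ^ 2 = (n:ℝ)⁻¹ * (n:ℝ)⁻¹ * ∑ i, ∑ j, ⟪K (x i), K (x j)⟫ := by
      intro x
      rw [← real_inner_self_eq_norm_sq, hA, real_inner_smul_left, real_inner_smul_right,
        sum_inner]
      rw [mul_assoc]
      congr 1
      congr 1
      apply Finset.sum_congr rfl
      intro i _
      rw [inner_sum]
    simp_rw [hptw]
    rw [integral_const_mul]
    congr 1
    rw [integral_finset_sum _ (fun i _ => integrable_finset_sum _ (fun j _ => hIntKij i j))]
    have : ∀ i : Fin n, ∫ x, ∑ j, ⟪K (x i), K (x j)⟫ ∂Pn = Q * n + (Ek - Q) := by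
      intro i
      rw [integral_finset_sum _ (fun j _ => hIntKij i j)]
      simp_rw [hKij i]
      have : ∀ j : Fin n, (if i = j then Ek else Q) = Q + (if i = j then Ek - Q else 0) := by
        intro j; split_ifs <;> ring
      simp_rw [this]
      rw [Finset.sum_add_distrib]
      simp [Finset.sum_ite_eq]
      ring
    simp_rw [this]
    simp only [Finset.sum_const, Finset.card_univ, Fintype.card_fin, nsmul_eq_mul]
  -- put everything together
  have hsplit : ∫ x, ‖m - A x‖ ^ 2 ∂Pn
      = ‖m‖ ^ 2 - 2 * Q + (n:ℝ)⁻¹ * (n:ℝ)⁻¹ * (n * (Q * n + (Ek - Q))) := by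
    simp_rw [hexp]
    have e1 : ∫ x, (‖m‖ ^ 2 - 2 * ⟪m, A x⟫ + ‖A x‖ ^ 2) ∂Pn
        = (∫ x, (‖m‖ ^ 2 - 2 * ⟪m, A x⟫) ∂Pn) + ∫ x, ‖A x‖ ^ 2 ∂Pn :=
      integral_add (Integrable.sub (integrable_const _) (hIntInner.const_mul 2)) hIntA2
    have e2 : ∫ x, (‖m‖ ^ 2 - 2 * ⟪m, A x⟫) ∂Pn
        = (∫ _x : Fin n → Z, ‖m‖ ^ 2 ∂Pn) - ∫ x, 2 * ⟪m, A x⟫ ∂Pn :=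
      integral_sub (integrable_const _) (hIntInner.const_mul 2)
    rw [e1, e2, integral_const, integral_const_mul, hT2, hT3]
    simp
  have hQ0 : 0 ≤ Q := real_inner_self_nonneg
  have hmQ : ‖m‖ ^ 2 = Q := (real_inner_self_eq_norm_sq m).symm
  rw [← hPn, ← hm, ← hEk, ← hA] at *
  calc ∫ x, ‖m - A x‖ ^ 2 ∂Pn
      = ‖m‖ ^ 2 - 2 * Q + (n:ℝ)⁻¹ * (n:ℝ)⁻¹ * (n * (Q * n + (Ek - Q))) := hsplit
    _ = Ek / n - Q / n := by rw [hmQ]; field_simp; ring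
    _ ≤ Ek / n := by
        have : 0 ≤ Q / n := div_nonneg hQ0 hnR.le
        linarith
end

lemma clean_concentration {Z H : Type*} [MeasurableSpace Z] [NormedAddCommGroup H]
    [InnerProductSpace ℝ H] [CompleteSpace H]
    (K : Z → H) (hsm : StronglyMeasurable K) (hK1 : ∀ z, ‖K z‖ ≤ 1)
    (P : Measure Z) [IsProbabilityMeasure P]
    (n : ℕ) (hn : 0 < n) (δ : ℝ) (hδ : 0 < δ) (hδ1 : δ < 1) :
    ENNReal.ofReal (1 - δ) ≤
      (Measure.pi fun _ : Fin n => P)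
        {zs | ‖(∫ x, K x ∂P) - (n : ℝ)⁻¹ • ∑ i, K (zs i)‖ ≤
          2 * Real.sqrt ((∫ z, ⟪K z, K z⟫ ∂P) / n) +
            Real.sqrt (2 * Real.log (1 / δ) / n)} := by
  set Pn : Measure (Fin n → Z) := Measure.pi fun _ : Fin n => P with hPn
  set m : H := ∫ z, K z ∂P with hm
  set Ek : ℝ := ∫ z, ⟪K z, K z⟫ ∂P with hEk
  have hnR : (0:ℝ) < n := by exact_mod_cast hn
  set A : (Fin n → Z) → H := fun x => (n : ℝ)⁻¹ • ∑ i, K (x i) with hA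
  set g : (Fin n → Z) → ℝ := fun x => ‖m - A x‖ with hg
  have hm1 : ‖m‖ ≤ 1 := by
    calc ‖m‖ ≤ 1 * P.real Set.univ := norm_integral_le_of_norm_le_const
          (Filter.Eventually.of_forall hK1)
      _ = 1 := by simp
  have hsmA : StronglyMeasurable A := by
    apply StronglyMeasurable.const_smul
    exact Finset.stronglyMeasurable_fun_sum _ fun i _ => hsm.comp_measurable (measurable_pi_apply i)
  have hA1 : ∀ x, ‖A x‖ ≤ 1 := by
    intro x
    rw [hA]
    simp only [norm_smul, norm_inv, Real.norm_natCast]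
    rw [inv_mul_le_iff₀ hnR, mul_one]
    calc ‖∑ i, K (x i)‖ ≤ ∑ i : Fin n, ‖K (x i)‖ := norm_sum_le _ _
      _ ≤ ∑ _i : Fin n, (1:ℝ) := Finset.sum_le_sum fun i _ => hK1 _
      _ = n := by simp
  have hgmeas : Measurable g := (stronglyMeasurable_const.sub hsmA).norm.measurable
  have hgB : ∀ x, |g x| ≤ 2 := by
    intro x
    rw [abs_of_nonneg (norm_nonneg _)]
    calc ‖m - A x‖ ≤ ‖m‖ + ‖A x‖ := norm_sub_le _ _
      _ ≤ 1 + 1 := add_le_add hm1 (hA1 x)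
      _ = 2 := by norm_num
  have hdiff : ∀ (x : Fin n → Z) (i : Fin n) (y : Z),
      |g x - g (Function.update x i y)| ≤ 2 / n := by
    intro x i y
    have hAA : A (Function.update x i y) - A x = (n : ℝ)⁻¹ • (K y - K (x i)) := by
      rw [hA]
      rw [← smul_sub]
      congr 1
      have hupdate : (fun k => K (Function.update x i y k))
          = Function.update (fun k => K (x k)) i (K y) := by
        funext k
        rcases eq_or_ne k i with rfl | hk
        · simp
        · simp [Function.update_of_ne hk]
      rw [hupdate]
      rw [Finset.sum_update_of_mem (Finset.mem_univ i)]
      rw [Finset.sum_eq_sum_sdiff_singleton_add (Finset.mem_univ i) (fun k => K (x k))]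
      abel
    calc |g x - g (Function.update x i y)|
        = |‖m - A x‖ - ‖m - A (Function.update x i y)‖| := rfl
      _ ≤ ‖(m - A x) - (m - A (Function.update x i y))‖ := abs_norm_sub_norm_le _ _
      _ = ‖A (Function.update x i y) - A x‖ := by congr 1; abel
      _ = ‖(n : ℝ)⁻¹ • (K y - K (x i))‖ := by rw [hAA]
      _ ≤ (n : ℝ)⁻¹ * 2 := by
          rw [norm_smul, norm_inv, Real.norm_natCast]
          apply mul_le_mul_of_nonneg_left _ (by positivity)
          calc ‖K y - K (x i)‖ ≤ ‖K y‖ + ‖K (x i)‖ := norm_sub_le _ _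
            _ ≤ 1 + 1 := add_le_add (hK1 _) (hK1 _)
            _ = 2 := by norm_num
      _ = 2 / n := by rw [inv_mul_eq_div, div_eq_div_iff hnR.ne' hnR.ne']
  -- the mean is at most √(Ek/n)
  have hIntg : Integrable g Pn :=
    integrable_of_abs_bound ((stronglyMeasurable_const.sub hsmA).norm.aestronglyMeasurable) 2
      (fun x => by rw [Real.norm_eq_abs]; exact hgB x)
  have hIntg2 : Integrable (fun x => g x ^ 2) Pn :=
    integrable_of_abs_bound (((stronglyMeasurable_const.sub hsmA).norm.pow 2).aestronglyMeasurable) 4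
      (fun x => by
        rw [Real.norm_eq_abs, abs_pow]
        calc |g x| ^ 2 ≤ 2 ^ 2 := by
              apply pow_le_pow_left₀ (abs_nonneg _) (hgB x)
          _ = 4 := by norm_num)
  set Eg : ℝ := ∫ x, g x ∂Pn with hEgdef
  have hvar : Eg ^ 2 ≤ ∫ x, g x ^ 2 ∂Pn := by
    have h0 : (0:ℝ) ≤ ∫ x, (g x - Eg) ^ 2 ∂Pn := integral_nonneg fun x => sq_nonneg _
    have hexpand : ∫ x, (g x - Eg) ^ 2 ∂Pn = (∫ x, g x ^ 2 ∂Pn) - Eg ^ 2 := by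
      have hptw : ∀ x, (g x - Eg) ^ 2 = g x ^ 2 - (2 * Eg) * g x + Eg ^ 2 := by
        intro x; ring
      simp_rw [hptw]
      have e1 : ∫ x, (g x ^ 2 - (2 * Eg) * g x + Eg ^ 2) ∂Pn
          = (∫ x, (g x ^ 2 - (2 * Eg) * g x) ∂Pn) + ∫ _x : Fin n → Z, Eg ^ 2 ∂Pn :=
        integral_add (hIntg2.sub (hIntg.const_mul _)) (integrable_const _)
      have e2 : ∫ x, (g x ^ 2 - (2 * Eg) * g x) ∂Pn
          = (∫ x, g x ^ 2 ∂Pn) - ∫ x, (2 * Eg) * g x ∂Pn :=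
        integral_sub hIntg2 (hIntg.const_mul _)
      rw [e1, e2, integral_const_mul, integral_const]
      simp only [probReal_univ, smul_eq_mul, one_mul]
      rw [← hEgdef]
      ring
    rw [hexpand] at h0
    linarith
  have hEg0 : 0 ≤ Eg := integral_nonneg fun x => norm_nonneg _
  have hEg : Eg ≤ Real.sqrt (Ek / n) := by
    have h2 : ∫ x, g x ^ 2 ∂Pn ≤ Ek / n := second_moment_bound K hsm hK1 P n hn
    have := Real.sqrt_le_sqrt (hvar.trans h2)
    rwa [Real.sqrt_sq_eq_abs, abs_of_nonneg hEg0] at this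
  -- apply McDiarmid
  have hlog : 0 < Real.log (1 / δ) := by
    apply Real.log_pos
    rw [lt_div_iff₀ hδ]
    linarith
  set b : ℝ := Real.sqrt (2 * Real.log (1 / δ) / n) with hb
  have hbpos : 0 < b := Real.sqrt_pos.mpr (by positivity)
  set ε : ℝ := Real.sqrt (Ek / n) + b with hε
  have hEknn : 0 ≤ Real.sqrt (Ek / n) := Real.sqrt_nonneg _
  have hεpos : 0 < ε := by positivity
  have htail := mcdiarmid_tail P n hn g hgmeas 2 hgB (2 / n) (by positivity) hdiff ε hεpos
  set R : ℝ := 2 * Real.sqrt (Ek / n) + b with hR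
  set S : Set (Fin n → Z) := {zs | ‖m - A zs‖ ≤ R} with hS
  have hsub : Sᶜ ⊆ {x | Eg + ε ≤ g x} := by
    intro x hx
    simp only [hS, Set.mem_compl_iff, Set.mem_setOf_eq, not_le] at hx
    simp only [Set.mem_setOf_eq]
    have : Eg + ε ≤ R := by
      rw [hR, hε]
      linarith
    calc Eg + ε ≤ R := this
      _ ≤ g x := hx.le
  have hexpbound : Real.exp (-2 * ε ^ 2 / (n * (2 / n) ^ 2)) ≤ δ := by
    have hε2 : 2 * Real.log (1 / δ) / n ≤ ε ^ 2 := by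
      have hbsq : b ^ 2 = 2 * Real.log (1 / δ) / n := Real.sq_sqrt (by positivity)
      calc 2 * Real.log (1 / δ) / n = b ^ 2 := hbsq.symm
        _ ≤ ε ^ 2 := by
            apply pow_le_pow_left₀ hbpos.le _ 2
            rw [hε]; linarith
    have harg : -2 * ε ^ 2 / (n * (2 / n) ^ 2) ≤ -Real.log (1 / δ) := by
      have hden : n * (2 / n : ℝ) ^ 2 = 4 / n := by field_simp; ring
      rw [hden]
      rw [div_le_iff₀ (by positivity)]
      have : -2 * ε ^ 2 ≤ -2 * (2 * Real.log (1 / δ) / n) := by linarith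
      calc -2 * ε ^ 2 ≤ -2 * (2 * Real.log (1 / δ) / n) := this
        _ = -Real.log (1 / δ) * (4 / n) := by
            field_simp
            ring
    calc Real.exp (-2 * ε ^ 2 / (n * (2 / n) ^ 2)) ≤ Real.exp (-Real.log (1 / δ)) :=
          Real.exp_le_exp.mpr harg
      _ = δ := by
          rw [Real.exp_neg, Real.exp_log (by positivity)]
          simp
  have hcompl : Pn Sᶜ ≤ ENNReal.ofReal δ := by
    calc Pn Sᶜ ≤ Pn {x | (∫ x', g x' ∂Pn) + ε ≤ g x} := measure_mono hsub
      _ ≤ ENNReal.ofReal (Real.exp (-2 * ε ^ 2 / (n * (2 / n) ^ 2))) := htail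
      _ ≤ ENNReal.ofReal δ := ENNReal.ofReal_le_ofReal hexpbound
  have h1 : (1 : ENNReal) ≤ Pn S + ENNReal.ofReal δ := by
    calc (1 : ENNReal) = Pn Set.univ := measure_univ.symm
      _ = Pn (S ∪ Sᶜ) := by rw [Set.union_compl_self]
      _ ≤ Pn S + Pn Sᶜ := measure_union_le _ _
      _ ≤ Pn S + ENNReal.ofReal δ := add_le_add le_rfl hcompl
  have h2 : ENNReal.ofReal (1 - δ) = 1 - ENNReal.ofReal δ := by
    rw [ENNReal.ofReal_sub _ hδ.le, ENNReal.ofReal_one]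
  rw [h2]
  exact tsub_le_iff_right.mpr h1

/-- Theorem 1: concentration of the empirical kernel mean embedding.
With probability at least `1 − δ` over an i.i.d. sample of size `n` from `P`,
`‖μ_k(P) − μ_k(P_S)‖ ≤ 2 √(𝔼_{z∼P}[k(z,z)]/n) + √(2 log(1/δ)/n)`. -/
theorem empirical_mean_embedding_concentration {Z H : Type*} [MeasurableSpace Z]
    [NormedAddCommGroup H] [InnerProductSpace ℝ H] [CompleteSpace H]
    (K : Z → H)
    (hbound : ∀ f : H, ‖f‖ ≤ 1 → ∀ z, |⟪f, K z⟫| ≤ 1)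
    (P : Measure Z) [IsProbabilityMeasure P]
    (hInt : Integrable K P)
    (hInt2 : Integrable (fun z => ⟪K z, K z⟫) P)
    (n : ℕ) (hn : 0 < n) (δ : ℝ) (hδ : 0 < δ) (hδ1 : δ < 1) :
    ENNReal.ofReal (1 - δ) ≤
      (Measure.pi fun _ : Fin n => P)
        {zs | ‖(∫ x, K x ∂P) - (n : ℝ)⁻¹ • ∑ i, K (zs i)‖ ≤
          2 * Real.sqrt ((∫ z, ⟪K z, K z⟫ ∂P) / n) +
            Real.sqrt (2 * Real.log (1 / δ) / n)} := by
  have hK1 : ∀ z, ‖K z‖ ≤ 1 := by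
    intro z
    rcases eq_or_ne (K z) 0 with h | h
    · simp [h]
    · have hf : ‖(‖K z‖⁻¹ • K z : H)‖ ≤ 1 := by
        rw [norm_smul, norm_inv, norm_norm, inv_mul_cancel₀ (norm_ne_zero_iff.mpr h)]
      have hb := hbound _ hf z
      rw [real_inner_smul_left, real_inner_self_eq_norm_sq] at hb
      have heq : ‖K z‖⁻¹ * ‖K z‖ ^ 2 = ‖K z‖ := by
        rw [sq]
        rw [← mul_assoc, inv_mul_cancel₀ (norm_ne_zero_iff.mpr h), one_mul]
      rw [heq, abs_of_nonneg (norm_nonneg _)] at hb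
      exact hb
  set Pn : Measure (Fin n → Z) := Measure.pi fun _ : Fin n => P with hPn
  set mk : Z → H := hInt.1.mk K with hmkdef
  have hsmk : StronglyMeasurable mk := hInt.1.stronglyMeasurable_mk
  have hae : K =ᵐ[P] mk := hInt.1.ae_eq_mk
  set s : Set Z := {z | ‖mk z‖ ≤ 1} with hs
  have hsmeas : MeasurableSet s := measurableSet_le hsmk.norm.measurable measurable_const
  set K' : Z → H := s.indicator mk with hK'def
  have hsm' : StronglyMeasurable K' := hsmk.indicator hsmeas
  have hK'1 : ∀ z, ‖K' z‖ ≤ 1 := by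
    intro z
    by_cases hz : z ∈ s
    · rw [hK'def, Set.indicator_of_mem hz]; exact hz
    · rw [hK'def, Set.indicator_of_notMem hz]; simp
  have hKK' : K =ᵐ[P] K' := by
    filter_upwards [hae] with z hz
    have hz1 : z ∈ s := by rw [hs, Set.mem_setOf_eq, ← hz]; exact hK1 z
    rw [hK'def, Set.indicator_of_mem hz1, ← hz]
  have hm : ∫ x, K x ∂P = ∫ x, K' x ∂P := integral_congr_ae hKK'
  have hEk : ∫ z, ⟪K z, K z⟫ ∂P = ∫ z, ⟪K' z, K' z⟫ ∂P :=
    integral_congr_ae (by filter_upwards [hKK'] with z hz; rw [hz])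
  have hmain := clean_concentration K' hsm' hK'1 P n hn δ hδ hδ1
  rw [hm, hEk]
  refine hmain.trans (le_of_eq ?_)
  -- the two events agree almost everywhere
  set N : Set Z := {z | ¬ K z = K' z} with hN
  have hNnull : P N = 0 := ae_iff.mp hKK'
  set t : Set Z := toMeasurable P N with ht
  have htnull : P t = 0 := by rw [ht, measure_toMeasurable]; exact hNnull
  have htmeas : MeasurableSet t := measurableSet_toMeasurable _ _
  set G : Set (Fin n → Z) := ⋃ i, Function.eval i ⁻¹' t with hG
  have hGnull : Pn G = 0 := by
    apply measure_iUnion_null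
    intro i
    have hev := measurePreserving_eval_pi P n i
    have : Pn (Function.eval i ⁻¹' t) = (Pn.map (Function.eval i)) t := by
      rw [Measure.map_apply hev.measurable htmeas]
    rw [this, hev.map_eq]
    exact htnull
  apply measure_congr
  rw [Filter.eventuallyEq_set]
  have hae' : ∀ᵐ x ∂Pn, x ∉ G := by
    rw [ae_iff]
    simp only [not_not]
    exact hGnull
  filter_upwards [hae'] with x hx
  have hKeq : ∀ i, K' (x i) = K (x i) := by
    intro i
    by_contra hcon
    apply hx
    rw [hG, Set.mem_iUnion]
    exact ⟨i, subset_toMeasurable P N (by rw [hN, Set.mem_setOf_eq]; exact fun h => hcon h.symm)⟩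
  have : ∑ i, K' (x i) = ∑ i, K (x i) := Finset.sum_congr rfl fun i _ => hKeq i
  simp only [Set.mem_setOf_eq, this]
end

section
/- Let k be a shift-invariant kernel on ℝ^d with nonnegative integrable Fourier transform p_k and C_k = ∫ p_k(w) dw. Then for all z, z' ∈ ℝ^d, k(z,z') = 2 C_k · 𝔼_{w,b}[cos(⟨w,z⟩ + b) cos(⟨w,z'⟩ + b)], where w ∼ p_k/C_k and b ∼ Uniform[0, 2π] are independent. -/
open scoped RealInnerProductSpace
open MeasureTheory
open scoped ENNReal NNReal

lemma cos_prod_integral (a b : ℝ) :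
    ∫ x in (0:ℝ)..(2*Real.pi), Real.cos (a + x) * Real.cos (b + x)
      = Real.pi * Real.cos (a - b) := by
  have key : ∀ x : ℝ, HasDerivAt (fun x => x * Real.cos (a-b) / 2 + Real.sin (a+b+2*x) / 4)
      (Real.cos (a + x) * Real.cos (b + x)) x := by
    intro x
    have h1 : HasDerivAt (fun x : ℝ => x * Real.cos (a-b) / 2) (Real.cos (a-b)/2) x := by
      simpa using ((hasDerivAt_id x).mul_const (Real.cos (a-b))).div_const 2
    have h2 : HasDerivAt (fun x : ℝ => Real.sin (a+b+2*x) / 4) (Real.cos (a+b+2*x)/2) x := by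
      have hd : HasDerivAt (fun x : ℝ => a+b+2*x) 2 x := by
        simpa using ((hasDerivAt_id x).const_mul 2).const_add (a+b)
      have : HasDerivAt (fun x : ℝ => Real.sin (a+b+2*x) / 4) (Real.cos (a+b+2*x) * 2 / 4) x := by
        have := ((Real.hasDerivAt_sin (a+b+2*x)).comp x hd).div_const 4; exact this
      convert this using 1
      ring
    have h := h1.add h2
    have heq : Real.cos (a-b)/2 + Real.cos (a+b+2*x)/2
        = Real.cos (a+x) * Real.cos (b+x) := by
      rw [show a+b+2*x = (a+x)+(b+x) from by ring, show a-b = (a+x)-(b+x) from by ring,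
        Real.cos_add, Real.cos_sub]
      ring
    rw [← heq]
    exact h
  have hcont : Continuous fun x => Real.cos (a + x) * Real.cos (b + x) := by continuity
  rw [intervalIntegral.integral_eq_sub_of_hasDerivAt (fun x _ => key x)
      (hcont.intervalIntegrable _ _)]
  have h4 : a + b + 2*(2*Real.pi) = (a + b + 2*Real.pi) + 2*Real.pi := by ring
  rw [h4, Real.sin_add_two_pi, Real.sin_add_two_pi]
  ring

/-- random-feature (Bochner) representation of a shift-invariant kernel:
`k(z,z') = 2 C_k 𝔼_{w,b}[cos(⟨w,z⟩+b) cos(⟨w,z'⟩+b)]`, where `w ∼ p_k / C_k` and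
`b ∼ Uniform[0,2π]` are independent. -/
theorem shift_invariant_kernel_random_feature_representation (d : ℕ)
    (p : EuclideanSpace ℝ (Fin d) → ℝ)
    (hp0 : ∀ w, 0 ≤ p w) (hpmeas : Measurable p) (hpInt : Integrable p)
    (Ck : ℝ) (hCk : Ck = ∫ w, p w) (hCkpos : 0 < Ck)
    (k : EuclideanSpace ℝ (Fin d) → EuclideanSpace ℝ (Fin d) → ℝ)
    (hk : ∀ z z', k z z' = ∫ w, p w * Real.cos ⟪w, z - z'⟫) :
    ∀ z z', k z z' = 2 * Ck *
      ∫ wb : EuclideanSpace ℝ (Fin d) × ℝ,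
          Real.cos (⟪wb.1, z⟫ + wb.2) * Real.cos (⟪wb.1, z'⟫ + wb.2)
        ∂((volume.withDensity fun w => ENNReal.ofReal (p w / Ck)).prod
            ((ENNReal.ofReal (2 * Real.pi))⁻¹ •
              (volume.restrict (Set.Icc (0 : ℝ) (2 * Real.pi))))) := by
  intro z z'
  set μ := volume.withDensity fun w => ENNReal.ofReal (p w / Ck) with hμ
  set ν := (ENNReal.ofReal (2 * Real.pi))⁻¹ •
      (volume.restrict (Set.Icc (0 : ℝ) (2 * Real.pi))) with hν
  have hq0 : ∀ w, 0 ≤ p w / Ck := fun w => div_nonneg (hp0 w) hCkpos.le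
  have hqInt : Integrable (fun w => p w / Ck) := hpInt.div_const Ck
  haveI : IsFiniteMeasure μ := by
    refine isFiniteMeasure_withDensity ?_
    rw [← ofReal_integral_eq_lintegral_ofReal hqInt (Filter.Eventually.of_forall hq0)]
    exact ENNReal.ofReal_ne_top
  haveI : IsFiniteMeasure ν := by
    constructor
    rw [hν]
    simp only [Measure.smul_apply, smul_eq_mul]
    refine ENNReal.mul_lt_top ?_ ?_
    · exact (ENNReal.inv_lt_top.mpr (by positivity)).trans_le le_top |>.trans_le le_rfl
    · rw [Measure.restrict_apply_univ]
      exact measure_Icc_lt_top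
  have hfcont : Continuous fun wb : EuclideanSpace ℝ (Fin d) × ℝ =>
      Real.cos (⟪wb.1, z⟫ + wb.2) * Real.cos (⟪wb.1, z'⟫ + wb.2) := by
    apply Continuous.mul <;> exact Real.continuous_cos.comp
      (((continuous_fst.inner continuous_const)).add continuous_snd)
  have hfInt : Integrable (fun wb : EuclideanSpace ℝ (Fin d) × ℝ =>
      Real.cos (⟪wb.1, z⟫ + wb.2) * Real.cos (⟪wb.1, z'⟫ + wb.2)) (μ.prod ν) := by
    refine (integrable_const (1 : ℝ)).mono' hfcont.aestronglyMeasurable ?_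
    filter_upwards with wb
    rw [Real.norm_eq_abs, abs_mul]
    exact mul_le_one₀ (Real.abs_cos_le_one _) (abs_nonneg _) (Real.abs_cos_le_one _)
  rw [integral_prod _ hfInt]
  have hinner : ∀ w : EuclideanSpace ℝ (Fin d),
      (∫ x, Real.cos (⟪w, z⟫ + x) * Real.cos (⟪w, z'⟫ + x) ∂ν)
        = Real.cos ⟪w, z - z'⟫ / 2 := by
    intro w
    rw [hν, integral_smul_measure]
    have hIcc : (∫ x in Set.Icc (0:ℝ) (2*Real.pi),
        Real.cos (⟪w, z⟫ + x) * Real.cos (⟪w, z'⟫ + x))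
          = Real.pi * Real.cos (⟪w, z⟫ - ⟪w, z'⟫) := by
      rw [integral_Icc_eq_integral_Ioc,
        ← intervalIntegral.integral_of_le (by positivity : (0:ℝ) ≤ 2*Real.pi)]
      exact cos_prod_integral _ _
    rw [hIcc, inner_sub_right]
    have h2π : (0:ℝ) < 2 * Real.pi := by positivity
    rw [ENNReal.toReal_inv, ENNReal.toReal_ofReal h2π.le, smul_eq_mul]
    have hπ := Real.pi_ne_zero
    field_simp
  calc k z z' = 2 * Ck * ∫ w, (p w / Ck) * (Real.cos ⟪w, z - z'⟫ / 2) ∂(volume) := by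
        rw [hk]
        have hCk0 : Ck ≠ 0 := ne_of_gt hCkpos
        have key : ∀ x c : ℝ, x / Ck * (c / 2) = 1 / (2*Ck) * (x * c) := by
          intro x c
          rw [div_mul_div_comm, div_mul_eq_mul_div, one_mul, mul_comm Ck 2]
        have : ∀ w : EuclideanSpace ℝ (Fin d),
            (p w / Ck) * (Real.cos ⟪w, z - z'⟫ / 2)
              = (1 / (2*Ck)) * (p w * Real.cos ⟪w, z - z'⟫) := fun w => key _ _
        simp_rw [this, integral_const_mul]
        field_simp
    _ = 2 * Ck * ∫ w, ∫ x, Real.cos (⟪w, z⟫ + x) * Real.cos (⟪w, z'⟫ + x) ∂ν ∂μ := by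
        congr 1
        rw [hμ]
        have hd : (fun w => ENNReal.ofReal (p w / Ck))
            = fun w => ((fun w => (p w / Ck).toNNReal) w : ℝ≥0∞) := by
          funext w; simp [ENNReal.ofReal]
        rw [hd, integral_withDensity_eq_integral_smul
          (by exact (hpmeas.div_const Ck).real_toNNReal)]
        congr 1; funext w
        rw [hinner w]
        simp [NNReal.smul_def, Real.coe_toNNReal _ (hq0 w)]
end

section
/- Let k be a shift-invariant kernel on ℝ^d with sup_z k(z,z) ≤ 1 and random-feature representation k(z,·) = 𝔼_{w,b}[g^z_{w,b}(·)]. Fix a finite set S = {z_1,…,z_n} ⊂ ℝ^d and a probability measure Q on ℝ^d. Draw (w_1,b_1),…,(w_m,b_m) i.i.d. and set ĝ^z_m = (1/m)∑_{j=1}^m g^z_{w_j,b_j}. Then with probability at least 1 − δ over the random features, ‖μ_k(P_S) − (1/n)∑_{i=1}^n ĝ^{z_i}_m‖_{L²(Q)} ≤ (2C_k/√m)(1 + √(2 log(n/δ))). -/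
open scoped RealInnerProductSpace
open MeasureTheory
open Real MeasureTheory
open scoped ENNReal NNReal


lemma rfe_quarter_aux (p q e : ℝ) (hpe : 0 < q + p * e) :
    0 ≤ 1 / 4 - p * q * e / (q + p * e) ^ 2 := by
  rw [sub_nonneg, div_le_iff₀ (by positivity)]
  nlinarith [sq_nonneg (q - p * e)]

lemma rfe_key_aux (p : ℝ) (hp0 : 0 ≤ p) (hp1 : p ≤ 1) (h : ℝ) :
    (1 - p) + p * Real.exp h ≤ Real.exp (p * h + h ^ 2 / 8) := by
  rcases eq_or_lt_of_le hp0 with hp | hp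
  · simp only [← hp, sub_zero, zero_mul, add_zero, zero_add, mul_zero]
    have : (0:ℝ) ≤ h ^ 2 / 8 := by positivity
    simpa using Real.one_le_exp this
  set q : ℝ := 1 - p with hq
  have hq0 : 0 ≤ q := by simp only [hq]; linarith
  have hD : ∀ x : ℝ, 0 < q + p * Real.exp x := by
    intro x
    have := Real.exp_pos x
    nlinarith
  set φ : ℝ → ℝ := fun x => p * x + x ^ 2 / 8 - Real.log (q + p * Real.exp x) with hφ
  set φ' : ℝ → ℝ := fun x => p + x / 4 - p * Real.exp x / (q + p * Real.exp x) with hφ'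
  have hφeval : ∀ x : ℝ, φ x = p * x + x ^ 2 / 8 - Real.log (q + p * Real.exp x) :=
    fun _ => rfl
  have hφ'eval : ∀ x : ℝ, φ' x = p + x / 4 - p * Real.exp x / (q + p * Real.exp x) :=
    fun _ => rfl
  have hDeriv : ∀ x : ℝ, HasDerivAt φ (φ' x) x := by
    intro x
    have h1 : HasDerivAt (fun x : ℝ => q + p * Real.exp x) (p * Real.exp x) x := by
      simpa using ((Real.hasDerivAt_exp x).const_mul p).const_add q
    have h2 : HasDerivAt (fun x : ℝ => Real.log (q + p * Real.exp x))
        (p * Real.exp x / (q + p * Real.exp x)) x := h1.log (ne_of_gt (hD x))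
    have h3 : HasDerivAt (fun x : ℝ => p * x + x ^ 2 / 8) (p + x / 4) x := by
      have := ((hasDerivAt_id x).const_mul p).add ((hasDerivAt_pow 2 x).div_const 8)
      exact this.congr_deriv (by norm_num; ring)
    rw [hφ'eval]
    exact h3.sub h2
  have hDeriv' : ∀ x : ℝ, HasDerivAt φ'
      (1 / 4 - p * q * Real.exp x / (q + p * Real.exp x) ^ 2) x := by
    intro x
    have h1 : HasDerivAt (fun x : ℝ => q + p * Real.exp x) (p * Real.exp x) x := by
      simpa using ((Real.hasDerivAt_exp x).const_mul p).const_add q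
    have h2 : HasDerivAt (fun x : ℝ => p * Real.exp x) (p * Real.exp x) x :=
      (Real.hasDerivAt_exp x).const_mul p
    have h3 := h2.div h1 (ne_of_gt (hD x))
    have h4 : HasDerivAt (fun x : ℝ => p + x / 4) (1 / 4) x := by
      simpa using ((hasDerivAt_id x).div_const 4).const_add p
    have h5 := h4.sub h3
    refine h5.congr_deriv ?_
    have hne := (hD x).ne'
    ring
  have hφ'' : ∀ x : ℝ, 0 ≤ 1 / 4 - p * q * Real.exp x / (q + p * Real.exp x) ^ 2 :=
    fun x => rfe_quarter_aux p q (Real.exp x) (hD x)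
  have hcont : Continuous φ := by
    have hdiff : Differentiable ℝ φ := fun x => (hDeriv x).differentiableAt
    exact hdiff.continuous
  have hmono : Monotone φ' := by
    apply monotone_of_deriv_nonneg
    · exact fun x => (hDeriv' x).differentiableAt
    · intro x
      rw [(hDeriv' x).deriv]
      exact hφ'' x
  have hφ'0 : φ' 0 = 0 := by
    rw [hφ'eval, Real.exp_zero]
    have h1 : q + p * 1 = 1 := by simp [hq]
    rw [h1]
    ring
  have hφ0 : φ 0 = 0 := by
    rw [hφeval, Real.exp_zero]
    have h1 : q + p * 1 = 1 := by simp [hq]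
    rw [h1, Real.log_one]
    ring
  have hφnonneg : 0 ≤ φ h := by
    rcases le_or_gt 0 h with hh | hh
    · have hmo : MonotoneOn φ (Set.Ici 0) := by
        apply monotoneOn_of_deriv_nonneg (convex_Ici 0) hcont.continuousOn
        · intro x hx
          exact (hDeriv x).differentiableAt.differentiableWithinAt
        · intro x hx
          rw [(hDeriv x).deriv]
          rw [interior_Ici] at hx
          calc (0:ℝ) = φ' 0 := hφ'0.symm
            _ ≤ φ' x := hmono (le_of_lt hx)
      have := hmo Set.self_mem_Ici (Set.mem_Ici.mpr hh) hh
      rwa [hφ0] at this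
    · have hmo : AntitoneOn φ (Set.Iic 0) := by
        apply antitoneOn_of_deriv_nonpos (convex_Iic 0) hcont.continuousOn
        · intro x hx
          exact (hDeriv x).differentiableAt.differentiableWithinAt
        · intro x hx
          rw [(hDeriv x).deriv]
          rw [interior_Iic] at hx
          calc φ' x ≤ φ' 0 := hmono (le_of_lt hx)
            _ = 0 := hφ'0
      have := hmo (Set.mem_Iic.mpr (le_of_lt hh)) Set.self_mem_Iic (le_of_lt hh)
      rwa [hφ0] at this
  have hlog : Real.log (q + p * Real.exp h) ≤ p * h + h ^ 2 / 8 := by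
    rw [hφeval] at hφnonneg
    linarith
  calc q + p * Real.exp h = Real.exp (Real.log (q + p * Real.exp h)) :=
        (Real.exp_log (hD h)).symm
    _ ≤ Real.exp (p * h + h ^ 2 / 8) := Real.exp_le_exp.mpr hlog

lemma rfe_hoeffding {α : Type*} [MeasurableSpace α] (μ : Measure α) [IsProbabilityMeasure μ]
    (X : α → ℝ) (hX : Measurable X) (a b : ℝ) (hab : ∀ x, a ≤ X x ∧ X x ≤ b)
    (h0 : ∫ x, X x ∂μ = 0) (c : ℝ) :
    ∫ x, Real.exp (c * X x) ∂μ ≤ Real.exp (c ^ 2 * (b - a) ^ 2 / 8) := by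
  have hXint : Integrable X μ := by
    refine (integrable_const (max |a| |b|)).mono' hX.aestronglyMeasurable
      (ae_of_all _ fun x => ?_)
    rw [Real.norm_eq_abs, abs_le]
    constructor
    · have := (hab x).1
      have h2 : -|a| ≤ a := neg_abs_le a
      have : -(max |a| |b|) ≤ -|a| := by
        simp only [neg_le_neg_iff]
        exact le_max_left _ _
      linarith [(hab x).1, neg_abs_le a]
    · exact le_trans (hab x).2 (le_trans (le_abs_self b) (le_max_right _ _))
  have ha0 : a ≤ 0 := by
    have h1 : ∫ x, (a : ℝ) ∂μ ≤ ∫ x, X x ∂μ :=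
      integral_mono (integrable_const a) hXint fun x => (hab x).1
    simpa [h0] using h1
  have hb0 : 0 ≤ b := by
    have h1 : ∫ x, X x ∂μ ≤ ∫ x, (b : ℝ) ∂μ :=
      integral_mono hXint (integrable_const b) fun x => (hab x).2
    simpa [h0] using h1
  rcases eq_or_lt_of_le (le_trans ha0 hb0) with hE | hab'
  · -- a = b = 0, X ≡ 0
    have ha : a = 0 := le_antisymm ha0 (by rw [hE] at ha0 ⊢; linarith [ha0, hb0, hE.symm ▸ le_refl a])
    have hb : b = 0 := by rw [← hE, ha]
    have hXz : ∀ x, X x = 0 := fun x => le_antisymm (hb ▸ (hab x).2) (ha ▸ (hab x).1)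
    simp only [hXz, mul_zero, Real.exp_zero, integral_const, measure_univ, ENNReal.toReal_one, probReal_univ,
      one_smul, smul_eq_mul, mul_one]
    exact Real.one_le_exp (by positivity)
  · set p : ℝ := -a / (b - a) with hp
    have hba : 0 < b - a := by linarith
    have hp0 : 0 ≤ p := by
      apply div_nonneg (by linarith) (le_of_lt hba)
    have hp1 : p ≤ 1 := by
      rw [hp, div_le_one hba]
      linarith
    set C1 : ℝ := (b * Real.exp (c * a) - a * Real.exp (c * b)) / (b - a) with hC1
    set C2 : ℝ := (Real.exp (c * b) - Real.exp (c * a)) / (b - a) with hC2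
    have hpt : ∀ x, Real.exp (c * X x) ≤ C1 + C2 * X x := by
      intro x
      have h1 : (0:ℝ) ≤ (b - X x) / (b - a) := div_nonneg (by linarith [(hab x).2]) hba.le
      have h2 : (0:ℝ) ≤ (X x - a) / (b - a) := div_nonneg (by linarith [(hab x).1]) hba.le
      have h3 : (b - X x) / (b - a) + (X x - a) / (b - a) = 1 := by
        field_simp
        ring
      have h4 := convexOn_exp.2 (Set.mem_univ (c * a)) (Set.mem_univ (c * b)) h1 h2 h3
      have h5 : ((b - X x) / (b - a)) • (c * a) + ((X x - a) / (b - a)) • (c * b) = c * X x := by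
        simp only [smul_eq_mul]
        field_simp
        ring
      rw [h5] at h4
      have h6 : ((b - X x) / (b - a)) • Real.exp (c * a) + ((X x - a) / (b - a)) • Real.exp (c * b)
          = C1 + C2 * X x := by
        simp only [smul_eq_mul, hC1, hC2]
        field_simp
        ring
      rw [h6] at h4
      exact h4
    have hexpint : Integrable (fun x => Real.exp (c * X x)) μ := by
      refine (integrable_const (Real.exp (|c| * max |a| |b|))).mono'
        ((Real.continuous_exp.measurable.comp (hX.const_mul c)).aestronglyMeasurable)
        (ae_of_all _ fun x => ?_)
      rw [Real.norm_eq_abs, Real.abs_exp, Real.exp_le_exp]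
      calc c * X x ≤ |c * X x| := le_abs_self _
        _ = |c| * |X x| := abs_mul _ _
        _ ≤ |c| * max |a| |b| := by
            apply mul_le_mul_of_nonneg_left _ (abs_nonneg c)
            rw [abs_le]
            refine ⟨?_, le_trans (hab x).2 (le_trans (le_abs_self b) (le_max_right _ _))⟩
            linarith [(hab x).1, neg_abs_le a, neg_le_neg (le_max_left |a| |b|)]
    have hint : ∫ x, Real.exp (c * X x) ∂μ ≤ ∫ x, (C1 + C2 * X x) ∂μ :=
      integral_mono hexpint ((integrable_const C1).add (hXint.const_mul C2)) hpt
    have hval : ∫ x, (C1 + C2 * X x) ∂μ = C1 := by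
      rw [integral_add (integrable_const C1) (hXint.const_mul C2), integral_const,
        integral_const_mul, h0]
      simp
    rw [hval] at hint
    have hC1eq : C1 = Real.exp (c * a) * ((1 - p) + p * Real.exp (c * (b - a))) := by
      rw [hC1, hp]
      have hexp : Real.exp (c * b) = Real.exp (c * a) * Real.exp (c * (b - a)) := by
        rw [← Real.exp_add]; congr 1; ring
      rw [hexp]
      field_simp
      ring
    have hkey := rfe_key_aux p hp0 hp1 (c * (b - a))
    have hfin : C1 ≤ Real.exp (c * a) * Real.exp (p * (c * (b - a)) + (c * (b - a)) ^ 2 / 8) := by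
      rw [hC1eq]
      exact mul_le_mul_of_nonneg_left hkey (Real.exp_pos _).le
    rw [← Real.exp_add] at hfin
    have harg : c * a + (p * (c * (b - a)) + (c * (b - a)) ^ 2 / 8)
        = c ^ 2 * (b - a) ^ 2 / 8 := by
      rw [hp]
      field_simp
      ring
    rw [harg] at hfin
    exact le_trans hint hfin
lemma rfe_integral_pi_prod {α : Type*} [MeasurableSpace α] (ν : Measure α)
    [IsProbabilityMeasure ν] (m : ℕ) (f : α → ℝ) :
    ∫ ωs : Fin m → α, ∏ j, f (ωs j) ∂(Measure.pi fun _ : Fin m => ν)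
      = (∫ ω, f ω ∂ν) ^ m := by
  letI : MeasureSpace α := ⟨ν⟩
  haveI : SigmaFinite (volume : Measure α) := by
    have : (volume : Measure α) = ν := rfl
    rw [this]; infer_instance
  have hvol : Measure.pi (fun _ : Fin m => ν) = (volume : Measure (Fin m → α)) := rfl
  rw [hvol]
  have := MeasureTheory.integral_fintype_prod_eq_pow (ι := Fin m) (μ := (volume : Measure α)) f
  rw [Fintype.card_fin] at this
  exact this

lemma rfe_gauss_identity (y : ℝ) :
    ∫ x : ℝ, Real.exp (x * y - x ^ 2 / 2) = Real.sqrt (2 * Real.pi) * Real.exp (y ^ 2 / 2) := by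
  have h1 : ∀ x : ℝ, Real.exp (x * y - x ^ 2 / 2)
      = Real.exp (y ^ 2 / 2) * Real.exp (-((x - y) ^ 2) / 2) := by
    intro x
    rw [← Real.exp_add]
    congr 1
    ring
  simp_rw [h1]
  rw [MeasureTheory.integral_const_mul]
  have h2 : ∫ x : ℝ, Real.exp (-((x - y) ^ 2) / 2) = ∫ x : ℝ, Real.exp (-(x ^ 2) / 2) := by
    have := MeasureTheory.integral_sub_right_eq_self (μ := volume) (fun x : ℝ => Real.exp (-(x ^ 2) / 2)) y
    simpa using this
  rw [h2]
  have h3 : ∫ x : ℝ, Real.exp (-(x ^ 2) / 2) = Real.sqrt (2 * Real.pi) := by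
    have := integral_gaussian (1 / 2)
    simp_rw [show ∀ x : ℝ, -(1/2 : ℝ) * x ^ 2 = -(x^2)/2 by intro x; ring] at this
    rw [this]
    rw [div_div_eq_mul_div, mul_comm]
    norm_num
  rw [h3]
  ring
lemma rfe_sq_mgf {α : Type*} [MeasurableSpace α] (μ : Measure α) [IsProbabilityMeasure μ]
    (F : α → ℝ) (hF : Measurable F) (M : ℝ) (hM : ∀ x, |F x| ≤ M)
    (v : ℝ) (hv : 0 < v)
    (hmgf : ∀ c : ℝ, ∫ x, Real.exp (c * F x) ∂μ ≤ Real.exp (c ^ 2 * v / 2))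
    (s : ℝ) (hs : 0 < s) (hsv : 2 * s * v < 1) :
    ∫ x, Real.exp (s * F x ^ 2) ∂μ ≤ (Real.sqrt (1 - 2 * s * v))⁻¹ := by
  set r : ℝ := Real.sqrt (2 * s) with hr
  have hr2 : r ^ 2 = 2 * s := Real.sq_sqrt (by positivity)
  have hπ : (0:ℝ) < Real.sqrt (2 * Real.pi) := Real.sqrt_pos.mpr (by positivity)
  -- pointwise identity
  have hpt : ∀ x, Real.exp (s * F x ^ 2)
      = (Real.sqrt (2 * Real.pi))⁻¹ * ∫ t : ℝ, Real.exp (t * (r * F x) - t ^ 2 / 2) := by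
    intro x
    rw [rfe_gauss_identity (r * F x)]
    rw [show (r * F x) ^ 2 / 2 = s * F x ^ 2 by rw [mul_pow, hr2]; ring]
    field_simp
  -- joint integrability
  have hmeas : Measurable (fun z : α × ℝ => Real.exp (z.2 * (r * F z.1) - z.2 ^ 2 / 2)) := by
    apply Real.measurable_exp.comp
    exact (measurable_snd.mul ((hF.comp measurable_fst).const_mul r)).sub
      ((measurable_snd.pow_const 2).div_const 2)
  have hfix : ∀ x : α, Integrable (fun t : ℝ => Real.exp (t * (r * F x) - t ^ 2 / 2)) volume := by
    intro x
    have h1 : Integrable (fun t : ℝ => Real.exp (-(1/2 : ℝ) * t ^ 2)) volume :=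
      integrable_exp_neg_mul_sq (by norm_num)
    have h2 := (h1.comp_sub_right (r * F x)).const_mul (Real.exp ((r * F x) ^ 2 / 2))
    apply h2.congr
    filter_upwards with t
    rw [← Real.exp_add]
    congr 1
    ring
  have hnormval : ∀ x : α, (∫ t : ℝ, ‖Real.exp (t * (r * F x) - t ^ 2 / 2)‖)
      = Real.sqrt (2 * Real.pi) * Real.exp (s * F x ^ 2) := by
    intro x
    simp_rw [Real.norm_eq_abs, Real.abs_exp]
    rw [rfe_gauss_identity (r * F x)]
    rw [show (r * F x) ^ 2 / 2 = s * F x ^ 2 by rw [mul_pow, hr2]; ring]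
  have hint : Integrable (fun z : α × ℝ => Real.exp (z.2 * (r * F z.1) - z.2 ^ 2 / 2))
      (μ.prod volume) := by
    rw [integrable_prod_iff hmeas.aestronglyMeasurable]
    constructor
    · filter_upwards with x
      exact hfix x
    · have hbd : ∀ x : α, ‖∫ t : ℝ, ‖Real.exp (t * (r * F x) - t ^ 2 / 2)‖‖
          ≤ Real.sqrt (2 * Real.pi) * Real.exp (s * M ^ 2) := by
        intro x
        rw [hnormval x, Real.norm_eq_abs, abs_of_nonneg (by positivity)]
        apply mul_le_mul_of_nonneg_left _ hπ.le
        rw [Real.exp_le_exp]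
        apply mul_le_mul_of_nonneg_left _ hs.le
        calc F x ^ 2 = |F x| ^ 2 := (sq_abs _).symm
          _ ≤ M ^ 2 := by
              apply pow_le_pow_left₀ (abs_nonneg _) (hM x)
      refine (integrable_const (Real.sqrt (2 * Real.pi) * Real.exp (s * M ^ 2))).mono'
        ?_ (ae_of_all _ hbd)
      have : (fun x : α => ∫ t : ℝ, ‖Real.exp (t * (r * F x) - t ^ 2 / 2)‖)
          = fun x => Real.sqrt (2 * Real.pi) * Real.exp (s * F x ^ 2) := funext hnormval
      rw [this]
      exact (Real.measurable_exp.comp ((hF.pow_const 2).const_mul s)).aestronglyMeasurable.const_mul _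
  -- main chain
  have hswap : ∫ x, (∫ t : ℝ, Real.exp (t * (r * F x) - t ^ 2 / 2)) ∂μ
      = ∫ t : ℝ, (∫ x, Real.exp (t * (r * F x) - t ^ 2 / 2) ∂μ) := by
    exact MeasureTheory.integral_integral_swap hint
  have hinner : ∀ t : ℝ, ∫ x, Real.exp (t * (r * F x) - t ^ 2 / 2) ∂μ
      ≤ Real.exp (-(1/2 - s * v) * t ^ 2) := by
    intro t
    have h1 : ∀ x, Real.exp (t * (r * F x) - t ^ 2 / 2)
        = Real.exp (-(t ^ 2) / 2) * Real.exp ((t * r) * F x) := by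
      intro x
      rw [← Real.exp_add]
      congr 1
      ring
    simp_rw [h1]
    rw [MeasureTheory.integral_const_mul]
    calc Real.exp (-(t ^ 2) / 2) * ∫ x, Real.exp ((t * r) * F x) ∂μ
        ≤ Real.exp (-(t ^ 2) / 2) * Real.exp ((t * r) ^ 2 * v / 2) :=
          mul_le_mul_of_nonneg_left (hmgf (t * r)) (Real.exp_pos _).le
      _ = Real.exp (-(1/2 - s * v) * t ^ 2) := by
          rw [← Real.exp_add]
          congr 1
          rw [mul_pow, hr2]
          ring
  have houter : ∫ t : ℝ, (∫ x, Real.exp (t * (r * F x) - t ^ 2 / 2) ∂μ)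
      ≤ ∫ t : ℝ, Real.exp (-(1/2 - s * v) * t ^ 2) := by
    apply MeasureTheory.integral_mono _ (integrable_exp_neg_mul_sq (by linarith)) hinner
    exact hint.integral_prod_right
  have hgauss : ∫ t : ℝ, Real.exp (-(1/2 - s * v) * t ^ 2)
      = Real.sqrt (2 * Real.pi) * (Real.sqrt (1 - 2 * s * v))⁻¹ := by
    rw [integral_gaussian]
    rw [show Real.pi / (1/2 - s * v) = (2 * Real.pi) / (1 - 2 * s * v) by
      rw [div_eq_div_iff (by linarith) (by linarith)]; ring]
    rw [Real.sqrt_div (by positivity : (0:ℝ) ≤ 2 * Real.pi), div_eq_mul_inv]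
  calc ∫ x, Real.exp (s * F x ^ 2) ∂μ
      = ∫ x, ((Real.sqrt (2 * Real.pi))⁻¹
          * ∫ t : ℝ, Real.exp (t * (r * F x) - t ^ 2 / 2)) ∂μ :=
        MeasureTheory.integral_congr_ae (Filter.Eventually.of_forall hpt)
    _ = (Real.sqrt (2 * Real.pi))⁻¹
        * ∫ x, (∫ t : ℝ, Real.exp (t * (r * F x) - t ^ 2 / 2)) ∂μ := by
        rw [MeasureTheory.integral_const_mul]
    _ = (Real.sqrt (2 * Real.pi))⁻¹
        * ∫ t : ℝ, (∫ x, Real.exp (t * (r * F x) - t ^ 2 / 2) ∂μ) := by rw [hswap]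
    _ ≤ (Real.sqrt (2 * Real.pi))⁻¹ * (Real.sqrt (2 * Real.pi) * (Real.sqrt (1 - 2 * s * v))⁻¹) := by
        apply mul_le_mul_of_nonneg_left _ (by positivity)
        rw [← hgauss]
        exact houter
    _ = (Real.sqrt (1 - 2 * s * v))⁻¹ := by
        field_simp
lemma rfe_eLpNorm_le {α : Type*} [MeasurableSpace α] (Q : Measure α) [IsProbabilityMeasure Q]
    (g : α → ℝ) (hg : AEStronglyMeasurable g Q) (hgi : Integrable (fun t => g t ^ 2) Q)
    (ε : ℝ) (hε : 0 ≤ ε) (h : ∫ t, g t ^ 2 ∂Q ≤ ε ^ 2) :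
    eLpNorm g 2 Q ≤ ENNReal.ofReal ε := by
  rw [eLpNorm_eq_lintegral_rpow_enorm_toReal (by norm_num) (by norm_num)]
  have h1 : ∀ t, ‖g t‖ₑ ^ (2:ℝ) = ENNReal.ofReal (g t ^ 2) := by
    intro t
    calc ‖g t‖ₑ ^ (2:ℝ) = (ENNReal.ofReal |g t|) ^ (2:ℝ) := by
          rw [Real.enorm_eq_ofReal_abs]
      _ = ENNReal.ofReal (|g t| ^ (2:ℝ)) :=
          ENNReal.ofReal_rpow_of_nonneg (abs_nonneg _) (by norm_num)
      _ = ENNReal.ofReal (g t ^ 2) := by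
          rw [show ((2:ℝ)) = ((2:ℕ):ℝ) by norm_num, Real.rpow_natCast, sq_abs]
  have h2 : ∫⁻ t, ‖g t‖ₑ ^ (2:ℝ) ∂Q = ENNReal.ofReal (∫ t, g t ^ 2 ∂Q) := by
    rw [MeasureTheory.ofReal_integral_eq_lintegral_ofReal hgi
      (ae_of_all _ fun t => sq_nonneg _)]
    simp_rw [h1]
  have h3 : (ENNReal.ofReal (∫ t, g t ^ 2 ∂Q)) ^ (1/2 : ℝ)
      ≤ (ENNReal.ofReal (ε ^ 2)) ^ (1/2 : ℝ) := by
    apply ENNReal.rpow_le_rpow _ (by norm_num)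
    exact ENNReal.ofReal_le_ofReal h
  have h4 : (ENNReal.ofReal (ε ^ 2)) ^ (1/2 : ℝ) = ENNReal.ofReal ε := by
    rw [ENNReal.ofReal_rpow_of_nonneg (by positivity) (by norm_num)]
    congr 1
    rw [← Real.rpow_natCast ε 2, ← Real.rpow_mul hε]
    norm_num
  calc (∫⁻ t, ‖g t‖ₑ ^ (2:ℝ≥0∞).toReal ∂Q) ^ (1 / (2:ℝ≥0∞).toReal)
      = (∫⁻ t, ‖g t‖ₑ ^ (2:ℝ) ∂Q) ^ (1/2 : ℝ) := by norm_num
    _ = (ENNReal.ofReal (∫ t, g t ^ 2 ∂Q)) ^ (1/2 : ℝ) := by rw [h2]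
    _ ≤ (ENNReal.ofReal (ε ^ 2)) ^ (1/2 : ℝ) := h3
    _ = ENNReal.ofReal ε := h4

set_option maxHeartbeats 1000000 in
/-- Lemma 1: random-feature approximation of the empirical kernel mean
embedding in `L²(Q)`. With probability at least `1 − δ` over the i.i.d. random features
`(w_j,b_j) ∼ (p_k/C_k) × Uniform[0,2π]`,
`‖μ_k(P_S) − (1/n) ∑_i ĝ_m^{z_i}‖_{L²(Q)} ≤ (2 C_k/√m)(1 + √(2 log(n/δ)))`. -/
theorem random_feature_embedding_approximation (d : ℕ)
    (p : EuclideanSpace ℝ (Fin d) → ℝ)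
    (hp0 : ∀ w, 0 ≤ p w) (hpmeas : Measurable p) (hpInt : Integrable p)
    (Ck : ℝ) (hCkpos : 0 < Ck) (hCk : Ck = ∫ w, p w)
    (ν : Measure (EuclideanSpace ℝ (Fin d) × ℝ)) [IsProbabilityMeasure ν]
    (hν : ν = (volume.withDensity fun w => ENNReal.ofReal (p w / Ck)).prod
        ((ENNReal.ofReal (2 * Real.pi))⁻¹ •
          (volume.restrict (Set.Icc (0 : ℝ) (2 * Real.pi)))))
    (k : EuclideanSpace ℝ (Fin d) → EuclideanSpace ℝ (Fin d) → ℝ)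
    (hk : ∀ z t, k z t = 2 * Ck *
        ∫ wb, Real.cos (⟪wb.1, z⟫ + wb.2) * Real.cos (⟪wb.1, t⟫ + wb.2) ∂ν)
    (hkbound : ∀ z, k z z ≤ 1)
    (Q : Measure (EuclideanSpace ℝ (Fin d))) [IsProbabilityMeasure Q]
    (n : ℕ) (hn : 0 < n) (z : Fin n → EuclideanSpace ℝ (Fin d))
    (m : ℕ) (hm : 0 < m) (δ : ℝ) (hδ : 0 < δ) (hδ1 : δ < 1) :
    ENNReal.ofReal (1 - δ) ≤
      (Measure.pi fun _ : Fin m => ν)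
        {ωs | eLpNorm
            (fun t => (n : ℝ)⁻¹ * ∑ i, k (z i) t -
              (n : ℝ)⁻¹ * ∑ i, (m : ℝ)⁻¹ * ∑ j,
                2 * Ck * Real.cos (⟪(ωs j).1, z i⟫ + (ωs j).2) *
                  Real.cos (⟪(ωs j).1, t⟫ + (ωs j).2)) 2 Q
          ≤ ENNReal.ofReal
              (2 * Ck / Real.sqrt m * (1 + Real.sqrt (2 * Real.log (n / δ))))} := by
  classical
  set μm : Measure (Fin m → EuclideanSpace ℝ (Fin d) × ℝ) := Measure.pi (fun _ : Fin m => ν) with hμm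
  -- the random feature function
  set ψ : EuclideanSpace ℝ (Fin d) × ℝ → EuclideanSpace ℝ (Fin d) → ℝ := fun ω t => Real.cos (⟪ω.1, t⟫ + ω.2) with hψ
  have hψbd : ∀ ω t, |ψ ω t| ≤ 1 := fun ω t => Real.abs_cos_le_one _
  have hψmeas : ∀ t, Measurable (fun ω : EuclideanSpace ℝ (Fin d) × ℝ => ψ ω t) := by
    intro t
    apply Real.measurable_cos.comp
    exact ((Measurable.inner_const measurable_fst).add measurable_snd)
  have hψmeas2 : ∀ zz : EuclideanSpace ℝ (Fin d), Measurable (fun ω : EuclideanSpace ℝ (Fin d) × ℝ => ψ ω zz) := hψmeas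
  -- integrability of products of features
  have hccint : ∀ zz t : EuclideanSpace ℝ (Fin d), Integrable (fun ω : EuclideanSpace ℝ (Fin d) × ℝ => ψ ω zz * ψ ω t) ν := by
    intro zz t
    refine (integrable_const (1:ℝ)).mono'
      (((hψmeas zz).mul (hψmeas t)).aestronglyMeasurable) (ae_of_all _ fun ω => ?_)
    rw [Real.norm_eq_abs, abs_mul]
    exact mul_le_one₀ (hψbd ω zz) (abs_nonneg _) (hψbd ω t)
  -- bound on k
  have hkbd : ∀ zz t : EuclideanSpace ℝ (Fin d), |k zz t| ≤ 2 * Ck := by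
    intro zz t
    rw [hk zz t, abs_mul, abs_of_nonneg (by linarith : (0:ℝ) ≤ 2 * Ck)]
    have h1 : |∫ wb, Real.cos (⟪wb.1, zz⟫ + wb.2) * Real.cos (⟪wb.1, t⟫ + wb.2) ∂ν| ≤ 1 := by
      calc |∫ wb, Real.cos (⟪wb.1, zz⟫ + wb.2) * Real.cos (⟪wb.1, t⟫ + wb.2) ∂ν|
          ≤ ∫ wb, |Real.cos (⟪wb.1, zz⟫ + wb.2) * Real.cos (⟪wb.1, t⟫ + wb.2)| ∂ν := by
            have := MeasureTheory.norm_integral_le_integral_norm (μ := ν)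
                (fun wb : EuclideanSpace ℝ (Fin d) × ℝ =>
                  Real.cos (⟪wb.1, zz⟫ + wb.2) * Real.cos (⟪wb.1, t⟫ + wb.2))
            simp only [Real.norm_eq_abs] at this
            exact this
        _ ≤ ∫ _wb : EuclideanSpace ℝ (Fin d) × ℝ, (1:ℝ) ∂ν := by
            apply integral_mono ((hccint zz t).abs) (integrable_const 1)
            intro ω
            show |ψ ω zz * ψ ω t| ≤ 1
            rw [abs_mul]
            exact mul_le_one₀ (hψbd ω zz) (abs_nonneg _) (hψbd ω t)
        _ = 1 := by simp
    calc (2 * Ck) * |∫ wb, Real.cos (⟪wb.1, zz⟫ + wb.2) * Real.cos (⟪wb.1, t⟫ + wb.2) ∂ν|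
        ≤ (2 * Ck) * 1 := by
          exact mul_le_mul_of_nonneg_left h1 (by linarith)
      _ = 2 * Ck := mul_one _
  -- k is measurable in t
  have hkmeas : ∀ i : Fin n, Measurable (fun t => k (z i) t) := by
    intro i
    have h1 : StronglyMeasurable (fun q : EuclideanSpace ℝ (Fin d) × (EuclideanSpace ℝ (Fin d) × ℝ) => ψ q.2 (z i) * ψ q.2 q.1) := by
      apply Measurable.stronglyMeasurable
      apply Measurable.mul
      · exact Real.measurable_cos.comp
          ((Measurable.inner_const measurable_snd.fst).add measurable_snd.snd)
      · exact Real.measurable_cos.comp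
          ((measurable_snd.fst.inner measurable_fst).add measurable_snd.snd)
    have h2 : Measurable (fun t : EuclideanSpace ℝ (Fin d) =>
        ∫ ω, ψ ω (z i) * ψ ω t ∂ν) :=
      (MeasureTheory.StronglyMeasurable.integral_prod_right' (ν := ν) h1).measurable
    have h3 : (fun t => k (z i) t)
        = fun t => 2 * Ck * ∫ ω, ψ ω (z i) * ψ ω t ∂ν := by
      funext t
      exact hk (z i) t
    rw [h3]
    exact (h2.const_mul (2 * Ck))
  -- the centered one-feature variable
  set Y : EuclideanSpace ℝ (Fin d) × ℝ → EuclideanSpace ℝ (Fin d) → ℝ := fun ω t =>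
    (n : ℝ)⁻¹ * ∑ i, (k (z i) t - 2 * Ck * ψ ω (z i) * ψ ω t) with hY
  set K : EuclideanSpace ℝ (Fin d) → ℝ := fun t => (n : ℝ)⁻¹ * ∑ i, k (z i) t with hK
  have hn' : (0:ℝ) < n := Nat.cast_pos.mpr hn
  have hm' : (0:ℝ) < m := Nat.cast_pos.mpr hm
  have hKbd : ∀ t, |K t| ≤ 2 * Ck := by
    intro t
    rw [hK]
    calc |(n : ℝ)⁻¹ * ∑ i, k (z i) t| = (n : ℝ)⁻¹ * |∑ i, k (z i) t| := by
          rw [abs_mul, abs_of_nonneg (by positivity)]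
      _ ≤ (n : ℝ)⁻¹ * ∑ i, |k (z i) t| := by
          apply mul_le_mul_of_nonneg_left (Finset.abs_sum_le_sum_abs _ _) (by positivity)
      _ ≤ (n : ℝ)⁻¹ * ∑ _i : Fin n, (2 * Ck) := by
          apply mul_le_mul_of_nonneg_left _ (by positivity)
          exact Finset.sum_le_sum fun i _ => hkbd (z i) t
      _ = 2 * Ck := by
          rw [Finset.sum_const, Finset.card_univ, Fintype.card_fin, nsmul_eq_mul]
          field_simp
  have hYeq : ∀ ω t, Y ω t = K t - (n : ℝ)⁻¹ * ∑ i, 2 * Ck * ψ ω (z i) * ψ ω t := by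
    intro ω t
    rw [hY, hK]
    simp only [Finset.sum_sub_distrib, mul_sub]
  have hAbd : ∀ ω t, |(n : ℝ)⁻¹ * ∑ i, 2 * Ck * ψ ω (z i) * ψ ω t| ≤ 2 * Ck := by
    intro ω t
    calc |(n : ℝ)⁻¹ * ∑ i, 2 * Ck * ψ ω (z i) * ψ ω t|
        = (n : ℝ)⁻¹ * |∑ i, 2 * Ck * ψ ω (z i) * ψ ω t| := by
          rw [abs_mul, abs_of_nonneg (by positivity)]
      _ ≤ (n : ℝ)⁻¹ * ∑ i, |2 * Ck * ψ ω (z i) * ψ ω t| := by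
          apply mul_le_mul_of_nonneg_left (Finset.abs_sum_le_sum_abs _ _) (by positivity)
      _ ≤ (n : ℝ)⁻¹ * ∑ _i : Fin n, (2 * Ck) := by
          apply mul_le_mul_of_nonneg_left _ (by positivity)
          apply Finset.sum_le_sum
          intro i _
          rw [abs_mul, abs_mul, abs_of_nonneg (by linarith : (0:ℝ) ≤ 2 * Ck)]
          calc 2 * Ck * |ψ ω (z i)| * |ψ ω t| ≤ 2 * Ck * 1 * 1 := by
                apply mul_le_mul (by
                  apply mul_le_mul_of_nonneg_left (hψbd ω (z i)) (by linarith))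
                  (hψbd ω t) (abs_nonneg _) (by linarith)
            _ = 2 * Ck := by ring
      _ = 2 * Ck := by
          rw [Finset.sum_const, Finset.card_univ, Fintype.card_fin, nsmul_eq_mul]
          field_simp
  have hYbd : ∀ ω t, K t - 2 * Ck ≤ Y ω t ∧ Y ω t ≤ K t + 2 * Ck := by
    intro ω t
    rw [hYeq ω t]
    have := abs_le.mp (hAbd ω t)
    constructor <;> linarith [this.1, this.2]
  have hYmeas : ∀ t, Measurable (fun ω : EuclideanSpace ℝ (Fin d) × ℝ => Y ω t) := by
    intro t
    apply Measurable.const_mul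
    apply Finset.measurable_sum
    intro i _
    exact (measurable_const.sub (((hψmeas2 (z i)).const_mul (2 * Ck)).mul (hψmeas t)))
  have hYmean : ∀ t, ∫ ω, Y ω t ∂ν = 0 := by
    intro t
    rw [hY]
    simp only
    rw [integral_const_mul, integral_finset_sum]
    · have : ∀ i ∈ Finset.univ, ∫ ω : EuclideanSpace ℝ (Fin d) × ℝ, (k (z i) t - 2 * Ck * ψ ω (z i) * ψ ω t) ∂ν = 0 := by
        intro i _
        rw [integral_sub (integrable_const _)]
        · rw [integral_const]
          simp only [measure_univ, ENNReal.toReal_one, probReal_univ, smul_eq_mul, one_mul]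
          have h2 : ∀ ω : EuclideanSpace ℝ (Fin d) × ℝ, 2 * Ck * ψ ω (z i) * ψ ω t = 2 * Ck * (ψ ω (z i) * ψ ω t) := by
            intro ω; ring
          rw [funext h2, integral_const_mul, ← hk (z i) t]
          ring
        · have h2 : ∀ ω : EuclideanSpace ℝ (Fin d) × ℝ, 2 * Ck * ψ ω (z i) * ψ ω t = 2 * Ck * (ψ ω (z i) * ψ ω t) := by
            intro ω; ring
          rw [funext h2]
          exact (hccint (z i) t).const_mul _
      rw [Finset.sum_congr rfl this]
      simp
    · intro i _
      apply Integrable.sub (integrable_const _)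
      have h2 : ∀ ω : EuclideanSpace ℝ (Fin d) × ℝ, 2 * Ck * ψ ω (z i) * ψ ω t = 2 * Ck * (ψ ω (z i) * ψ ω t) := by
        intro ω; ring
      rw [funext h2]
      exact (hccint (z i) t).const_mul _
    -- Hoeffding bound for Y
  have hYmgf : ∀ (t : EuclideanSpace ℝ (Fin d)) (c' : ℝ), ∫ ω, Real.exp (c' * Y ω t) ∂ν
      ≤ Real.exp (c' ^ 2 * (4 * Ck) ^ 2 / 8) := by
    intro t c'
    have h := rfe_hoeffding ν (fun ω => Y ω t) (hYmeas t) (K t - 2 * Ck) (K t + 2 * Ck)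
      (fun ω => hYbd ω t) (hYmean t) c'
    have harg : (K t + 2 * Ck - (K t - 2 * Ck)) = 4 * Ck := by ring
    rwa [harg] at h
  set v : ℝ := 4 * Ck ^ 2 / m with hv
  have hvpos : 0 < v := by positivity
  set f : (Fin m → EuclideanSpace ℝ (Fin d) × ℝ) → EuclideanSpace ℝ (Fin d) → ℝ :=
    fun ωs t => (n : ℝ)⁻¹ * ∑ i, k (z i) t -
      (n : ℝ)⁻¹ * ∑ i, (m : ℝ)⁻¹ * ∑ j, 2 * Ck * ψ (ωs j) (z i) * ψ (ωs j) t with hf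
  have hfeval : ∀ ωs t, f ωs t = (n : ℝ)⁻¹ * ∑ i, k (z i) t -
      (n : ℝ)⁻¹ * ∑ i, (m : ℝ)⁻¹ * ∑ j, 2 * Ck * ψ (ωs j) (z i) * ψ (ωs j) t :=
    fun _ _ => rfl
  have hYeval : ∀ ω t, Y ω t
      = (n : ℝ)⁻¹ * ∑ i, (k (z i) t - 2 * Ck * ψ ω (z i) * ψ ω t) := fun _ _ => rfl
  have hfY : ∀ ωs t, f ωs t = (m : ℝ)⁻¹ * ∑ j, Y (ωs j) t := by
    intro ωs t
    rw [hfeval]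
    have e1 : ∀ j : Fin m, Y (ωs j) t = (n : ℝ)⁻¹ * ∑ i, k (z i) t
        - (n : ℝ)⁻¹ * ∑ i, 2 * Ck * ψ (ωs j) (z i) * ψ (ωs j) t := by
      intro j
      rw [hYeval, Finset.sum_sub_distrib, mul_sub]
    rw [Finset.sum_congr rfl (fun j _ => e1 j), Finset.sum_sub_distrib, mul_sub,
      Finset.sum_const, Finset.card_univ, Fintype.card_fin, nsmul_eq_mul]
    congr 1
    · rw [← mul_assoc, inv_mul_cancel₀ (ne_of_gt hm'), one_mul]
    · rw [show (∑ j, (n:ℝ)⁻¹ * ∑ i, 2 * Ck * ψ (ωs j) (z i) * ψ (ωs j) t)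
            = (n:ℝ)⁻¹ * ∑ j, ∑ i, 2 * Ck * ψ (ωs j) (z i) * ψ (ωs j) t from
          (Finset.mul_sum _ _ _).symm,
        Finset.sum_comm,
        show (∑ i, (m:ℝ)⁻¹ * ∑ j, 2 * Ck * ψ (ωs j) (z i) * ψ (ωs j) t)
            = (m:ℝ)⁻¹ * ∑ i, ∑ j, 2 * Ck * ψ (ωs j) (z i) * ψ (ωs j) t from
          (Finset.mul_sum _ _ _).symm]
      ring
  -- measurability of f in each variable and jointly
  have hfmeas : ∀ t, Measurable (fun ωs => f ωs t) := by
    intro t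
    apply Measurable.sub measurable_const
    apply Measurable.const_mul
    apply Finset.measurable_sum
    intro i _
    apply Measurable.const_mul
    apply Finset.measurable_sum
    intro j _
    exact (((hψmeas2 (z i)).comp (measurable_pi_apply j)).const_mul (2 * Ck)).mul
      ((hψmeas t).comp (measurable_pi_apply j))
  have hftmeas : ∀ ωs, Measurable (fun t => f ωs t) := by
    intro ωs
    apply Measurable.sub
    · exact (Finset.measurable_sum _ fun i _ => hkmeas i).const_mul _
    · apply Measurable.const_mul
      apply Finset.measurable_sum
      intro i _
      apply Measurable.const_mul
      apply Finset.measurable_sum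
      intro j _
      apply Measurable.const_mul
      exact Real.measurable_cos.comp
        ((Measurable.inner measurable_const measurable_id).add measurable_const)
  have hfjoint : Measurable (fun q :
      (Fin m → EuclideanSpace ℝ (Fin d) × ℝ) × EuclideanSpace ℝ (Fin d) => f q.1 q.2) := by
    apply Measurable.sub
    · exact ((Finset.measurable_sum _ fun i _ => (hkmeas i).comp measurable_snd).const_mul _)
    · apply Measurable.const_mul
      apply Finset.measurable_sum
      intro i _
      apply Measurable.const_mul
      apply Finset.measurable_sum
      intro j _
      have hωj : Measurable (fun q :
          (Fin m → EuclideanSpace ℝ (Fin d) × ℝ) × EuclideanSpace ℝ (Fin d) => q.1 j) :=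
        (measurable_pi_apply j).comp measurable_fst
      apply Measurable.mul
      · exact (((hψmeas2 (z i)).comp hωj).const_mul (2 * Ck))
      · exact Real.measurable_cos.comp ((hωj.fst.inner measurable_snd).add hωj.snd)
  -- uniform bound on f
  have hYabs : ∀ ω t, |Y ω t| ≤ 4 * Ck := by
    intro ω t
    rw [abs_le]
    have h1 := (hYbd ω t).1
    have h2 := (hYbd ω t).2
    have h3 := abs_le.mp (hKbd t)
    constructor <;> [linarith [h3.1]; linarith [h3.2]]
  have hfbd : ∀ ωs t, |f ωs t| ≤ 4 * Ck := by
    intro ωs t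
    rw [hfY]
    calc |(m:ℝ)⁻¹ * ∑ j, Y (ωs j) t| = (m:ℝ)⁻¹ * |∑ j, Y (ωs j) t| := by
          rw [abs_mul, abs_of_nonneg (by positivity)]
      _ ≤ (m:ℝ)⁻¹ * ∑ j, |Y (ωs j) t| := by
          apply mul_le_mul_of_nonneg_left (Finset.abs_sum_le_sum_abs _ _) (by positivity)
      _ ≤ (m:ℝ)⁻¹ * ∑ _j : Fin m, (4 * Ck) := by
          apply mul_le_mul_of_nonneg_left _ (by positivity)
          exact Finset.sum_le_sum fun j _ => hYabs (ωs j) t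
      _ = 4 * Ck := by
          rw [Finset.sum_const, Finset.card_univ, Fintype.card_fin, nsmul_eq_mul]
          field_simp
  -- mgf of f
  haveI : IsProbabilityMeasure μm := by rw [hμm]; infer_instance
  have hFmgf : ∀ (t : EuclideanSpace ℝ (Fin d)) (c : ℝ),
      ∫ ωs, Real.exp (c * f ωs t) ∂μm ≤ Real.exp (c ^ 2 * v / 2) := by
    intro t c
    have h1 : ∀ ωs : Fin m → EuclideanSpace ℝ (Fin d) × ℝ,
        Real.exp (c * f ωs t) = ∏ j, Real.exp ((c / m) * Y (ωs j) t) := by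
      intro ωs
      rw [← Real.exp_sum]
      congr 1
      rw [hfY, show (∑ j, (c / (m:ℝ)) * Y (ωs j) t)
          = (c / (m:ℝ)) * ∑ j, Y (ωs j) t from (Finset.mul_sum _ _ _).symm]
      ring
    calc ∫ ωs, Real.exp (c * f ωs t) ∂μm
        = ∫ ωs, ∏ j, Real.exp ((c / m) * Y (ωs j) t) ∂μm := by
          exact integral_congr_ae (Filter.Eventually.of_forall h1)
      _ = (∫ ω, Real.exp ((c / m) * Y ω t) ∂ν) ^ m := by
          rw [hμm]
          exact rfe_integral_pi_prod ν m (fun ω => Real.exp ((c / m) * Y ω t))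
      _ ≤ (Real.exp ((c / m) ^ 2 * (4 * Ck) ^ 2 / 8)) ^ m := by
          apply pow_le_pow_left₀ (integral_nonneg fun ω => (Real.exp_pos _).le)
          exact hYmgf t (c / m)
      _ = Real.exp (c ^ 2 * v / 2) := by
          rw [← Real.exp_nat_mul]
          congr 1
          rw [hv]
          field_simp
          ring
  -- the numeric setup
  set L : ℝ := Real.log (n / δ) with hLdef
  have hndpos : (1:ℝ) < n / δ := by
    rw [lt_div_iff₀ hδ]
    calc (1:ℝ) * δ = δ := one_mul δ
      _ < 1 := hδ1
      _ ≤ n := by exact_mod_cast Nat.one_le_cast.mpr hn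
  have hLpos : 0 < L := Real.log_pos hndpos
  set x₀ : ℝ := Real.sqrt (2 * L) with hx₀def
  have hx₀pos : 0 < x₀ := Real.sqrt_pos.mpr (by linarith)
  have hx₀sq : x₀ ^ 2 = 2 * L := Real.sq_sqrt (by linarith)
  set u : ℝ := (1 + x₀) ^ 2 with hudef
  have hu1 : 1 < u := by nlinarith
  have hu0 : (0:ℝ) < u := by linarith
  set s : ℝ := (1 - 1 / u) / (2 * v) with hsdef
  have hspos : 0 < s := by
    apply div_pos _ (by linarith)
    have : 1 / u < 1 := by rw [div_lt_one hu0]; exact hu1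
    linarith
  have h2sv : 2 * s * v = 1 - 1 / u := by
    rw [hsdef]
    field_simp
  have hsv1 : 2 * s * v < 1 := by
    rw [h2sv]
    have : 0 < 1 / u := by positivity
    linarith
  set ε : ℝ := 2 * Ck / Real.sqrt m * (1 + x₀) with hεdef
  have hεpos : 0 < ε := by
    apply mul_pos _ (by linarith)
    apply div_pos (by linarith) (Real.sqrt_pos.mpr hm')
  have hε2 : ε ^ 2 = v * u := by
    rw [hεdef, hudef, hv]
    rw [mul_pow, div_pow, Real.sq_sqrt hm'.le]
    ring
  have hR : (Real.sqrt (1 - 2 * s * v))⁻¹ = 1 + x₀ := by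
    rw [h2sv, show (1 - (1 - 1/u)) = 1/u by ring, one_div, Real.sqrt_inv, inv_inv, hudef,
      Real.sqrt_sq (by linarith)]
  have hsε : s * ε ^ 2 = x₀ + L := by
    rw [hε2, hsdef]
    have hune : u ≠ 0 := ne_of_gt hu0
    have hvne : v ≠ 0 := ne_of_gt hvpos
    field_simp
    nlinarith [hx₀sq, hudef]
  have hnum : Real.exp (-(s * ε ^ 2)) * (1 + x₀) ≤ δ / n := by
    have h1 : (1 + x₀) ≤ Real.exp x₀ := by
      have := Real.add_one_le_exp x₀
      linarith
    calc Real.exp (-(s * ε ^ 2)) * (1 + x₀) ≤ Real.exp (-(s * ε ^ 2)) * Real.exp x₀ :=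
          mul_le_mul_of_nonneg_left h1 (Real.exp_pos _).le
      _ = Real.exp (-L) := by
          rw [← Real.exp_add, hsε]
          congr 1
          ring
      _ = δ / n := by
          rw [hLdef, ← Real.log_inv, Real.exp_log (by positivity), inv_div]
    -- the Q-integral of f squared
  set G : (Fin m → EuclideanSpace ℝ (Fin d) × ℝ) → ℝ := fun ωs => ∫ t, f ωs t ^ 2 ∂Q with hG
  have hGmeas : Measurable G := by
    have h1 : StronglyMeasurable (fun q :
        (Fin m → EuclideanSpace ℝ (Fin d) × ℝ) × EuclideanSpace ℝ (Fin d) => f q.1 q.2 ^ 2) :=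
      (hfjoint.pow_const 2).stronglyMeasurable
    exact h1.integral_prod_right'.measurable
  have hfQint : ∀ ωs, Integrable (fun t => f ωs t ^ 2) Q := by
    intro ωs
    refine (integrable_const ((4 * Ck) ^ 2)).mono'
      ((hftmeas ωs).pow_const 2).aestronglyMeasurable (ae_of_all _ fun t => ?_)
    rw [Real.norm_eq_abs, abs_of_nonneg (sq_nonneg _), ← sq_abs]
    exact pow_le_pow_left₀ (abs_nonneg _) (hfbd ωs t) 2
  have hGbd : ∀ ωs, G ωs ≤ (4 * Ck) ^ 2 := by
    intro ωs
    calc G ωs ≤ ∫ _t, ((4 * Ck) ^ 2) ∂Q := by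
          apply integral_mono (hfQint ωs) (integrable_const _)
          intro t
          simpa [sq_abs] using pow_le_pow_left₀ (abs_nonneg (f ωs t)) (hfbd ωs t) 2
      _ = (4 * Ck) ^ 2 := by simp
  -- integrability of all the exponentials
  have hexpfint : ∀ ωs, Integrable (fun t => Real.exp (s * f ωs t ^ 2)) Q := by
    intro ωs
    refine (integrable_const (Real.exp (s * (4 * Ck) ^ 2))).mono'
      (Real.measurable_exp.comp (((hftmeas ωs).pow_const 2).const_mul s)).aestronglyMeasurable
      (ae_of_all _ fun t => ?_)
    rw [Real.norm_eq_abs, Real.abs_exp, Real.exp_le_exp]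
    apply mul_le_mul_of_nonneg_left _ hspos.le
    rw [← sq_abs]
    exact pow_le_pow_left₀ (abs_nonneg _) (hfbd ωs t) 2
  have hexpGint : Integrable (fun ωs => Real.exp (s * G ωs)) μm := by
    refine (integrable_const (Real.exp (s * (4 * Ck) ^ 2))).mono'
      (Real.measurable_exp.comp (hGmeas.const_mul s)).aestronglyMeasurable
      (ae_of_all _ fun ωs => ?_)
    rw [Real.norm_eq_abs, Real.abs_exp, Real.exp_le_exp]
    exact mul_le_mul_of_nonneg_left (hGbd ωs) hspos.le
  have hjoint2 : Integrable (fun q :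
      (Fin m → EuclideanSpace ℝ (Fin d) × ℝ) × EuclideanSpace ℝ (Fin d) =>
        Real.exp (s * f q.1 q.2 ^ 2)) (μm.prod Q) := by
    refine (integrable_const (Real.exp (s * (4 * Ck) ^ 2))).mono'
      (Real.measurable_exp.comp ((hfjoint.pow_const 2).const_mul s)).aestronglyMeasurable
      (ae_of_all _ fun q => ?_)
    rw [Real.norm_eq_abs, Real.abs_exp, Real.exp_le_exp]
    apply mul_le_mul_of_nonneg_left _ hspos.le
    rw [← sq_abs]
    exact pow_le_pow_left₀ (abs_nonneg _) (hfbd q.1 q.2) 2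
  -- Jensen's inequality in t
  have hJen : ∀ ωs, Real.exp (s * G ωs) ≤ ∫ t, Real.exp (s * f ωs t ^ 2) ∂Q := by
    intro ωs
    have h0 : s * G ωs = ∫ t, s * f ωs t ^ 2 ∂Q := (integral_const_mul s _).symm
    rw [h0]
    have hgi : Integrable (Real.exp ∘ fun t => s * f ωs t ^ 2) Q := by
      have := hexpfint ωs
      exact this
    exact convexOn_exp.map_integral_le Real.continuous_exp.continuousOn
      isClosed_univ (ae_of_all _ fun t => Set.mem_univ _) ((hfQint ωs).const_mul s) hgi
  -- per-t bound on the square mgf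
  have hsq : ∀ t, ∫ ωs, Real.exp (s * f ωs t ^ 2) ∂μm ≤ 1 + x₀ := by
    intro t
    have h := rfe_sq_mgf μm (fun ωs => f ωs t) (hfmeas t) (4 * Ck) (fun ωs => hfbd ωs t)
      v hvpos (fun c => hFmgf t c) s hspos hsv1
    rwa [hR] at h
  have hswap : ∫ ωs, (∫ t, Real.exp (s * f ωs t ^ 2) ∂Q) ∂μm
      = ∫ t, (∫ ωs, Real.exp (s * f ωs t ^ 2) ∂μm) ∂Q :=
    integral_integral_swap hjoint2
  have hEG : ∫ ωs, Real.exp (s * G ωs) ∂μm ≤ 1 + x₀ := by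
    calc ∫ ωs, Real.exp (s * G ωs) ∂μm
        ≤ ∫ ωs, (∫ t, Real.exp (s * f ωs t ^ 2) ∂Q) ∂μm :=
          integral_mono hexpGint hjoint2.integral_prod_left hJen
      _ = ∫ t, (∫ ωs, Real.exp (s * f ωs t ^ 2) ∂μm) ∂Q := hswap
      _ ≤ ∫ _t, (1 + x₀) ∂Q :=
          integral_mono hjoint2.integral_prod_right (integrable_const _) hsq
      _ = 1 + x₀ := by simp
  -- Chernoff bound
  have hchern : μm {ωs | ε ^ 2 < G ωs} ≤ ENNReal.ofReal δ := by
    have hGm' : AEMeasurable (fun ωs => ENNReal.ofReal (Real.exp (s * G ωs))) μm :=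
      ((Real.measurable_exp.comp (hGmeas.const_mul s)).ennreal_ofReal).aemeasurable
    have h1 : {ωs | ε ^ 2 < G ωs} ⊆ {ωs | ENNReal.ofReal (Real.exp (s * ε ^ 2))
        ≤ ENNReal.ofReal (Real.exp (s * G ωs))} := by
      intro ωs hωs
      simp only [Set.mem_setOf_eq] at hωs ⊢
      apply ENNReal.ofReal_le_ofReal
      rw [Real.exp_le_exp]
      exact mul_le_mul_of_nonneg_left hωs.le hspos.le
    have h2 := mul_meas_ge_le_lintegral₀ hGm' (ENNReal.ofReal (Real.exp (s * ε ^ 2)))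
    have h3 : ∫⁻ ωs, ENNReal.ofReal (Real.exp (s * G ωs)) ∂μm
        = ENNReal.ofReal (∫ ωs, Real.exp (s * G ωs) ∂μm) :=
      (MeasureTheory.ofReal_integral_eq_lintegral_ofReal hexpGint
        (ae_of_all _ fun ωs => (Real.exp_pos _).le)).symm
    have h4 : ENNReal.ofReal (Real.exp (s * ε ^ 2)) * μm {ωs | ε ^ 2 < G ωs}
        ≤ ENNReal.ofReal (1 + x₀) := by
      calc ENNReal.ofReal (Real.exp (s * ε ^ 2)) * μm {ωs | ε ^ 2 < G ωs}
          ≤ ENNReal.ofReal (Real.exp (s * ε ^ 2)) * μm {ωs | ENNReal.ofReal (Real.exp (s * ε ^ 2))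
            ≤ ENNReal.ofReal (Real.exp (s * G ωs))} := mul_le_mul_right (measure_mono h1) _
        _ ≤ ∫⁻ ωs, ENNReal.ofReal (Real.exp (s * G ωs)) ∂μm := h2
        _ = ENNReal.ofReal (∫ ωs, Real.exp (s * G ωs) ∂μm) := h3
        _ ≤ ENNReal.ofReal (1 + x₀) := ENNReal.ofReal_le_ofReal hEG
    have h5 : μm {ωs | ε ^ 2 < G ωs}
        = ENNReal.ofReal (Real.exp (-(s * ε ^ 2)))
          * (ENNReal.ofReal (Real.exp (s * ε ^ 2)) * μm {ωs | ε ^ 2 < G ωs}) := by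
      rw [← mul_assoc, ← ENNReal.ofReal_mul (Real.exp_pos _).le, ← Real.exp_add,
        neg_add_cancel, Real.exp_zero, ENNReal.ofReal_one, one_mul]
    calc μm {ωs | ε ^ 2 < G ωs}
        = ENNReal.ofReal (Real.exp (-(s * ε ^ 2)))
          * (ENNReal.ofReal (Real.exp (s * ε ^ 2)) * μm {ωs | ε ^ 2 < G ωs}) := h5
      _ ≤ ENNReal.ofReal (Real.exp (-(s * ε ^ 2))) * ENNReal.ofReal (1 + x₀) :=
          mul_le_mul_right h4 _
      _ = ENNReal.ofReal (Real.exp (-(s * ε ^ 2)) * (1 + x₀)) :=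
          (ENNReal.ofReal_mul (Real.exp_pos _).le).symm
      _ ≤ ENNReal.ofReal (δ / n) := ENNReal.ofReal_le_ofReal hnum
      _ ≤ ENNReal.ofReal δ := by
          apply ENNReal.ofReal_le_ofReal
          apply div_le_self hδ.le
          exact_mod_cast Nat.one_le_cast.mpr hn
  -- wrap up
  have hcompl : ENNReal.ofReal (1 - δ) ≤ μm {ωs | G ωs ≤ ε ^ 2} := by
    have hBmeas : MeasurableSet {ωs | ε ^ 2 < G ωs} :=
      measurableSet_lt measurable_const hGmeas
    have h1 : {ωs | G ωs ≤ ε ^ 2} = {ωs | ε ^ 2 < G ωs}ᶜ := by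
      ext ωs
      simp [not_lt]
    rw [h1, measure_compl hBmeas (measure_ne_top _ _), measure_univ]
    calc ENNReal.ofReal (1 - δ) = 1 - ENNReal.ofReal δ := by
          rw [ENNReal.ofReal_sub 1 hδ.le, ENNReal.ofReal_one]
      _ ≤ 1 - μm {ωs | ε ^ 2 < G ωs} := tsub_le_tsub_left hchern 1
  refine le_trans hcompl (measure_mono ?_)
  intro ωs hωs
  simp only [Set.mem_setOf_eq] at hωs ⊢
  exact rfe_eLpNorm_le Q (fun t => f ωs t) (hftmeas ωs).aestronglyMeasurable
    (hfQint ωs) ε hεpos.le hωs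
end
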